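/- arXiv:1604.08929 — 13 statements merged into one kernel-verified Lean document; each statement's English description precedes it below -/
import Mathlib

section
/- Let S be a nonempty proper subset of ℕ. Then S is a numerical semigroup with the Arf property if and only if there exists an Arf sequence (x_1, …, x_n) such that S = S(x_1, …, x_n). -/
/-- A numerical semigroup: a subset of ℕ containing 0, closed under addition,
with finite complement. -/
def IsNumericalSemigroup (S : Set ℕ) : Prop :=
  0 ∈ S ∧ (∀ a ∈ S, ∀ b ∈ S, a + b ∈ S) ∧ Sᶜ.Finite

/-- The Arf property: for all x ≥ y ≥ z in S, x + y - z ∈ S. -/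
def HasArfProperty (S : Set ℕ) : Prop :=
  ∀ x ∈ S, ∀ y ∈ S, ∀ z ∈ S, z ≤ y → y ≤ x → x + y - z ∈ S

/-- The conductor: the least c such that every n ≥ c lies in S. -/
noncomputable def conductorOf (S : Set ℕ) : ℕ := sInf {c | ∀ n, c ≤ n → n ∈ S}

/-- The Frobenius number: the largest natural number not in S. -/
noncomputable def frobeniusOf (S : Set ℕ) : ℕ := sSup {n | n ∉ S}

/-- The genus: the number of gaps of S. -/
noncomputable def genusOf (S : Set ℕ) : ℕ := Sᶜ.ncard

/-- The multiplicity: the least positive element of S. -/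
noncomputable def multiplicityOf (S : Set ℕ) : ℕ := sInf {n | n ∈ S ∧ 0 < n}

/-- w(i) = min { s ∈ S : s ≡ i (mod m) }. -/
noncomputable def aperyW (S : Set ℕ) (m i : ℕ) : ℕ := sInf {s | s ∈ S ∧ s % m = i}

/-- The cocycle h(i,j) = (w(i) + w(j) - w((i+j) mod m)) / m, as a rational number. -/
noncomputable def cocycle (S : Set ℕ) (m i j : ℕ) : ℚ :=
  ((aperyW S m i : ℚ) + (aperyW S m j : ℚ) - (aperyW S m ((i + j) % m) : ℚ)) / (m : ℚ)

/-- An Arf sequence (x₁, …, xₙ), 0-indexed: xₙ ≥ ⋯ ≥ x₁ ≥ 2, and each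
x_{i+1} is either a sum x_i + ⋯ + x_j for some j ≤ i, or at least x_i + ⋯ + x₁. -/
def ArfSeq (n : ℕ) (x : Fin n → ℕ) : Prop :=
  1 ≤ n ∧ Monotone x ∧ (∀ i, 2 ≤ x i) ∧
  ∀ i : Fin n, ∀ h : i.1 + 1 < n,
    (∃ j : Fin n, j ≤ i ∧ x ⟨i.1 + 1, h⟩ = ∑ k ∈ Finset.Icc j i, x k) ∨
    (∑ k ∈ Finset.Iic i, x k) ≤ x ⟨i.1 + 1, h⟩

/-- The set S(x₁,…,xₙ) = {0} ∪ {xₙ + ⋯ + x_k : 1 ≤ k ≤ n} ∪ {z : z ≥ x₁ + ⋯ + xₙ}. -/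
def arfSet (n : ℕ) (x : Fin n → ℕ) : Set ℕ :=
  {z | z = 0 ∨ (∃ k : Fin n, z = ∑ i ∈ Finset.Ici k, x i) ∨ (∑ i, x i) ≤ z}

/-- The numerical-semigroup-like set generated by A ⊆ ℕ. -/
def genNS (A : Set ℕ) : Set ℕ := (AddSubmonoid.closure A : Set ℕ)

open Finset in
/-- ℕ-indexed version of `arfSet`. -/
def arfSetN (n : ℕ) (y : ℕ → ℕ) : Set ℕ :=
  {z | z = 0 ∨ (∃ k < n, z = ∑ i ∈ Finset.Ico k n, y i) ∨ (∑ i ∈ Finset.range n, y i) ≤ z}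

/-- ℕ-indexed version of `ArfSeq`, without the `1 ≤ n` requirement. -/
def ArfSeqN (n : ℕ) (y : ℕ → ℕ) : Prop :=
  (∀ i j, i ≤ j → j < n → y i ≤ y j) ∧ (∀ i < n, 2 ≤ y i) ∧
  ∀ i, i + 1 < n →
    (∃ j ≤ i, y (i + 1) = ∑ k ∈ Finset.Icc j i, y k) ∨
    (∑ k ∈ Finset.Iic i, y k) ≤ y (i + 1)

lemma arfSetN_zero (y : ℕ → ℕ) : arfSetN 0 y = Set.univ := by
  ext z; simp [arfSetN]

lemma arfSetN_congr {n : ℕ} {y y' : ℕ → ℕ} (h : ∀ i < n, y i = y' i) :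
    arfSetN n y = arfSetN n y' := by
  have hsum : ∀ k, ∑ i ∈ Finset.Ico k n, y i = ∑ i ∈ Finset.Ico k n, y' i := by
    intro k
    exact Finset.sum_congr rfl (fun i hi => h i (Finset.mem_Ico.mp hi).2)
  have hr : ∑ i ∈ Finset.range n, y i = ∑ i ∈ Finset.range n, y' i :=
    Finset.sum_congr rfl (fun i hi => h i (Finset.mem_range.mp hi))
  ext z
  simp only [arfSetN, Set.mem_setOf_eq, hr]
  constructor <;> rintro (h0 | ⟨k, hk, hz⟩ | hge)
  · exact Or.inl h0
  · exact Or.inr (Or.inl ⟨k, hk, by rw [hz, hsum k]⟩)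
  · exact Or.inr (Or.inr hge)
  · exact Or.inl h0
  · exact Or.inr (Or.inl ⟨k, hk, by rw [hz, hsum k]⟩)
  · exact Or.inr (Or.inr hge)

lemma ArfSeqN_congr {n : ℕ} {y y' : ℕ → ℕ} (h : ∀ i < n, y i = y' i)
    (hy : ArfSeqN n y) : ArfSeqN n y' := by
  obtain ⟨h1, h2, h3⟩ := hy
  refine ⟨fun i j hij hj => ?_, fun i hi => ?_, fun i hi => ?_⟩
  · rw [← h i (lt_of_le_of_lt hij hj), ← h j hj]; exact h1 i j hij hj
  · rw [← h i hi]; exact h2 i hi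
  · rcases h3 i hi with ⟨j, hj, hsum⟩ | hge
    · refine Or.inl ⟨j, hj, ?_⟩
      rw [← h (i+1) hi, hsum]
      exact Finset.sum_congr rfl (fun k hk =>
        h k (lt_of_le_of_lt (Finset.mem_Icc.mp hk).2 (by omega)))
    · refine Or.inr ?_
      rw [← h (i+1) hi]
      refine le_trans (le_of_eq ?_) hge
      exact Finset.sum_congr rfl (fun k hk =>
        (h k (lt_of_le_of_lt (Finset.mem_Iic.mp hk) (by omega))).symm)

lemma arfSetN_succ (n : ℕ) (y : ℕ → ℕ) :
    arfSetN (n + 1) y = insert 0 ((fun t => y n + t) '' arfSetN n y) := by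
  ext z
  simp only [arfSetN, Set.mem_setOf_eq, Set.mem_insert_iff, Set.mem_image]
  constructor
  · rintro (h0 | ⟨k, hk, hz⟩ | hge)
    · exact Or.inl h0
    · rcases Nat.lt_or_ge k n with hkn | hkn
      · refine Or.inr ⟨∑ i ∈ Finset.Ico k n, y i, Or.inr (Or.inl ⟨k, hkn, rfl⟩), ?_⟩
        rw [hz, Finset.sum_Ico_succ_top (le_of_lt hkn)]; ring
      · have hkn' : k = n := by omega
        refine Or.inr ⟨0, Or.inl rfl, ?_⟩
        rw [hz, hkn', Finset.sum_Ico_succ_top (le_refl n), Finset.Ico_self,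
          Finset.sum_empty]
        omega
    · have h1 : ∑ i ∈ Finset.range (n+1), y i = ∑ i ∈ Finset.range n, y i + y n :=
        Finset.sum_range_succ y n
      refine Or.inr ⟨z - y n, Or.inr (Or.inr (by omega)), by omega⟩
  · rintro (h0 | ⟨w, (hw0 | ⟨k, hk, hw⟩ | hwge), hz⟩)
    · exact Or.inl h0
    · subst hw0
      refine Or.inr (Or.inl ⟨n, by omega, ?_⟩)
      rw [← hz, Finset.sum_Ico_succ_top (le_refl n), Finset.Ico_self,
        Finset.sum_empty]; omega
    · refine Or.inr (Or.inl ⟨k, by omega, ?_⟩)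
      rw [← hz, hw, Finset.sum_Ico_succ_top (le_of_lt hk)]; ring
    · refine Or.inr (Or.inr ?_)
      rw [Finset.sum_range_succ, ← hz]; omega

/-- The key step: `{0} ∪ (m + S)` is an Arf numerical semigroup when `S` is and `m ∈ S`. -/
lemma step_lemma {S : Set ℕ} (hNS : IsNumericalSemigroup S) (hArf : HasArfProperty S)
    {m : ℕ} (hm : m ∈ S) :
    IsNumericalSemigroup (insert 0 ((fun t => m + t) '' S)) ∧
      HasArfProperty (insert 0 ((fun t => m + t) '' S)) := by
  obtain ⟨h0, hadd, hfin⟩ := hNS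
  set T : Set ℕ := insert 0 ((fun t => m + t) '' S) with hT
  have memT : ∀ z, z ∈ T ↔ z = 0 ∨ ∃ w ∈ S, z = m + w := by
    intro z
    simp only [hT, Set.mem_insert_iff, Set.mem_image]
    constructor
    · rintro (h | ⟨w, hw, rfl⟩)
      · exact Or.inl h
      · exact Or.inr ⟨w, hw, rfl⟩
    · rintro (h | ⟨w, hw, rfl⟩)
      · exact Or.inl h
      · exact Or.inr ⟨w, hw, rfl⟩
  constructor
  · refine ⟨Or.inl rfl, ?_, ?_⟩
    · intro a ha b hb
      rcases (memT a).mp ha with rfl | ⟨wa, hwa, rfl⟩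
      · simpa using hb
      rcases (memT b).mp hb with rfl | ⟨wb, hwb, rfl⟩
      · simpa using ha
      refine (memT _).mpr (Or.inr ⟨wa + (m + wb), ?_, by ring⟩)
      exact hadd wa hwa (m + wb) (hadd m hm wb hwb)
    · have hsub : Tᶜ ⊆ Set.Iio m ∪ (fun t => m + t) '' Sᶜ := by
        intro z hz
        rcases Nat.lt_or_ge z m with h | h
        · exact Or.inl h
        · refine Or.inr ⟨z - m, fun hzS => hz ?_, show m + (z - m) = z by omega⟩
          exact (memT z).mpr (Or.inr ⟨z - m, hzS, by omega⟩)
      exact Set.Finite.subset ((Set.finite_Iio m).union (hfin.image _)) hsub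
  · intro a ha b hb c hc hcb hba
    rcases (memT c).mp hc with rfl | ⟨wc, hwc, rfl⟩
    · -- c = 0 : need a + b ∈ T
      simp only [Nat.sub_zero]
      rcases (memT b).mp hb with rfl | ⟨wb, hwb, rfl⟩
      · simpa using ha
      rcases (memT a).mp ha with rfl | ⟨wa, hwa, rfl⟩
      · obtain ⟨rfl, rfl⟩ : m = 0 ∧ wb = 0 := by omega
        simpa using (memT 0).mpr (Or.inl rfl)
      refine (memT _).mpr (Or.inr ⟨wa + (m + wb), ?_, by ring⟩)
      exact hadd wa hwa (m + wb) (hadd m hm wb hwb)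
    · -- c = m + wc : then b, a are also of this form
      rcases (memT b).mp hb with rfl | ⟨wb, hwb, rfl⟩
      · obtain ⟨rfl, rfl⟩ : m = 0 ∧ wc = 0 := by omega
        rcases (memT a).mp ha with rfl | ⟨wa, hwa, rfl⟩
        · simpa using (memT 0).mpr (Or.inl rfl)
        · simpa using ha
      rcases (memT a).mp ha with rfl | ⟨wa, hwa, rfl⟩
      · obtain ⟨rfl, rfl⟩ : m = 0 ∧ wb = 0 := by omega
        have : wc = 0 := by omega
        subst this
        simpa using (memT 0).mpr (Or.inl rfl)
      have hwcb : wc ≤ wb := by omega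
      have hwba : wb ≤ wa := by omega
      have := hArf wa hwa wb hwb wc hwc hwcb hwba
      refine (memT _).mpr (Or.inr ⟨wa + wb - wc, this, by omega⟩)

lemma univ_NS : IsNumericalSemigroup (Set.univ : Set ℕ) ∧ HasArfProperty (Set.univ : Set ℕ) := by
  refine ⟨⟨trivial, fun _ _ _ _ => trivial, by simp⟩, fun _ _ _ _ _ _ _ _ => trivial⟩

lemma arfSeqN_destruct {n : ℕ} {y : ℕ → ℕ} (h : ArfSeqN (n+1) y) :
    ArfSeqN n y ∧ 2 ≤ y n ∧ y n ∈ arfSetN n y := by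
  obtain ⟨h1, h2, h3⟩ := h
  refine ⟨⟨fun i j hij hj => h1 i j hij (by omega), fun i hi => h2 i (by omega),
    fun i hi => h3 i (by omega)⟩, h2 n (by omega), ?_⟩
  rcases Nat.eq_zero_or_pos n with rfl | hn
  · rw [arfSetN_zero]; trivial
  · have := h3 (n-1) (by omega)
    have hn1 : n - 1 + 1 = n := by omega
    rw [hn1] at this
    rcases this with ⟨j, hj, hsum⟩ | hge
    · refine Or.inr (Or.inl ⟨j, by omega, ?_⟩)
      rw [hsum]
      congr 1
      ext k; simp [Finset.mem_Icc, Finset.mem_Ico]; omega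
    · refine Or.inr (Or.inr ?_)
      refine le_trans (le_of_eq ?_) hge
      congr 1
      ext k; simp [Finset.mem_Iic, Finset.mem_range]; omega

lemma arfSeqN_construct {n : ℕ} {y : ℕ → ℕ} (h : ArfSeqN n y) (h2n : 2 ≤ y n)
    (hmono : ∀ i < n, y i ≤ y n) (hmem : y n ∈ arfSetN n y) : ArfSeqN (n+1) y := by
  obtain ⟨h1, h2, h3⟩ := h
  refine ⟨?_, ?_, ?_⟩
  · intro i j hij hj
    rcases Nat.lt_or_ge j n with hjn | hjn
    · exact h1 i j hij hjn
    · have hje : j = n := by omega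
      rcases Nat.lt_or_ge i n with hin | hin
      · rw [hje]; exact hmono i hin
      · have : i = j := by omega
        rw [this]
  · intro i hi
    rcases Nat.lt_or_ge i n with hin | hin
    · exact h2 i hin
    · have : i = n := by omega
      rw [this]; exact h2n
  · intro i hi
    rcases Nat.lt_or_ge (i+1) n with hin | hin
    · exact h3 i hin
    · have hieq : i + 1 = n := by omega
      rcases hmem with h0 | ⟨k, hk, hsum⟩ | hge
      · omega
      · refine Or.inl ⟨k, by omega, ?_⟩
        rw [hieq, hsum]
        congr 1
        ext k; simp [Finset.mem_Icc, Finset.mem_Ico]; omega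
      · refine Or.inr ?_
        rw [hieq]
        refine le_trans (le_of_eq ?_) hge
        congr 1
        ext k; simp [Finset.mem_Iic, Finset.mem_range]; omega

/-- Main backward lemma: an Arf sequence set is an Arf numerical semigroup. -/
lemma arfSetN_is_arf : ∀ (n : ℕ) (y : ℕ → ℕ), ArfSeqN n y →
    IsNumericalSemigroup (arfSetN n y) ∧ HasArfProperty (arfSetN n y) := by
  intro n
  induction n with
  | zero => intro y _; rw [arfSetN_zero]; exact univ_NS
  | succ n ih =>
    intro y hy
    obtain ⟨hy', h2, hmem⟩ := arfSeqN_destruct hy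
    obtain ⟨hNS, hArf⟩ := ih y hy'
    rw [arfSetN_succ]
    exact step_lemma hNS hArf hmem

section Part2

lemma le_of_mem_arfSetN {n : ℕ} {y : ℕ → ℕ}
    (hmono : ∀ i j, i ≤ j → j < n → y i ≤ y j) {z : ℕ}
    (hz : z ∈ arfSetN n y) (hz0 : z ≠ 0) {i : ℕ} (hi : i < n) : y i ≤ z := by
  have hstep : y i ≤ y (n - 1) := hmono i (n-1) (by omega) (by omega)
  rcases hz with rfl | ⟨k, hk, rfl⟩ | hge
  · exact absurd rfl hz0
  · exact le_trans hstep (Finset.single_le_sum (f := y)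
      (fun _ _ => Nat.zero_le _) (Finset.mem_Ico.mpr ⟨by omega, by omega⟩))
  · refine le_trans hstep (le_trans (Finset.single_le_sum (f := y)
      (fun _ _ => Nat.zero_le _) (Finset.mem_range.mpr (by omega))) hge)

lemma eq_univ_of_one_mem {S : Set ℕ} (hNS : IsNumericalSemigroup S) (h1 : 1 ∈ S) :
    S = Set.univ := by
  obtain ⟨h0, hadd, _⟩ := hNS
  ext z
  simp only [Set.mem_univ, iff_true]
  induction z with
  | zero => exact h0
  | succ k ih => exact hadd k ih 1 h1

lemma exists_rep_aux : ∀ (g : ℕ) (S : Set ℕ), IsNumericalSemigroup S →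
    HasArfProperty S → Sᶜ.ncard ≤ g →
    ∃ n y, ArfSeqN n y ∧ S = arfSetN n y ∧ (S = Set.univ ∨ 1 ≤ n) := by
  intro g
  induction g with
  | zero =>
    intro S hNS hArf hg
    have hfin : Sᶜ.Finite := hNS.2.2
    have : Sᶜ = ∅ := (Set.ncard_eq_zero hfin).mp (Nat.le_zero.mp hg)
    have hSu : S = Set.univ := by
      rw [← Set.compl_empty, ← this, compl_compl]
    exact ⟨0, fun _ => 0, ⟨by omega, by omega, by omega⟩,
      by rw [hSu, arfSetN_zero], Or.inl hSu⟩
  | succ g ih =>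
    intro S hNS hArf hg
    by_cases hSu : S = Set.univ
    · exact ⟨0, fun _ => 0, ⟨by omega, by omega, by omega⟩,
        by rw [hSu, arfSetN_zero], Or.inl hSu⟩
    obtain ⟨h0, hadd, hfin⟩ := hNS
    have h1S : 1 ∉ S := fun h1 => hSu (eq_univ_of_one_mem ⟨h0, hadd, hfin⟩ h1)
    have hSinf : S.Infinite := by
      have := hfin.infinite_compl
      rwa [compl_compl] at this
    have hpos : {s | s ∈ S ∧ 0 < s}.Nonempty := by
      obtain ⟨s, hs⟩ := (hSinf.diff (Set.finite_singleton 0)).nonempty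
      exact ⟨s, hs.1, Nat.pos_of_ne_zero (by simpa using hs.2)⟩
    set m : ℕ := sInf {s | s ∈ S ∧ 0 < s} with hmdef
    have hm : m ∈ S ∧ 0 < m := Nat.sInf_mem hpos
    have hm2 : 2 ≤ m := by
      rcases Nat.lt_or_ge m 2 with h | h
      · interval_cases m
        · omega
        · exact absurd hm.1 h1S
      · exact h
    set S' : Set ℕ := {t : ℕ | t + m ∈ S} with hS'def
    have h0' : (0 : ℕ) ∈ S' := by
      show 0 + m ∈ S
      simpa using hm.1
    have hadd' : ∀ a ∈ S', ∀ b ∈ S', a + b ∈ S' := by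
      intro a ha b hb
      rcases le_total a b with hab | hab
      · have := hArf (b+m) hb (a+m) ha m hm.1 (by omega) (by omega)
        have heq : b + m + (a + m) - m = a + b + m := by omega
        rw [heq] at this
        exact this
      · have := hArf (a+m) ha (b+m) hb m hm.1 (by omega) (by omega)
        have heq : a + m + (b + m) - m = a + b + m := by omega
        rw [heq] at this
        exact this
    have hfin' : S'ᶜ.Finite := by
      have : S'ᶜ = (fun t => t + m) ⁻¹' Sᶜ := rfl
      rw [this]
      exact hfin.preimage (Set.injOn_of_injective (add_left_injective m))
    have hArf' : HasArfProperty S' := by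
      intro a ha b hb c hc hcb hba
      have := hArf (a+m) ha (b+m) hb (c+m) hc (by omega) (by omega)
      have heq : a + m + (b + m) - (c + m) = (a + b - c) + m := by omega
      rw [heq] at this
      exact this
    have hdecomp : S = insert 0 ((fun t => m + t) '' S') := by
      ext z
      constructor
      · intro hz
        rcases Nat.eq_zero_or_pos z with rfl | hzpos
        · exact Set.mem_insert _ _
        · have hmz : m ≤ z := Nat.sInf_le ⟨hz, hzpos⟩
          refine Set.mem_insert_of_mem _ ⟨z - m, ?_, show m + (z - m) = z by omega⟩
          show z - m + m ∈ S
          rw [Nat.sub_add_cancel hmz]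
          exact hz
      · rintro (rfl | ⟨t, ht, rfl⟩)
        · exact h0
        · have : t + m ∈ S := ht
          rwa [Nat.add_comm] at this
    have hlt : S'ᶜ.ncard < Sᶜ.ncard := by
      have himg : (fun t => t + m) '' S'ᶜ ⊆ Sᶜ := by
        rintro _ ⟨t, ht, rfl⟩
        exact ht
      have hne1 : (1 : ℕ) ∉ (fun t => t + m) '' S'ᶜ := by
        rintro ⟨t, _, hteq⟩
        have : t + m = 1 := hteq
        omega
      have hssub : (fun t => t + m) '' S'ᶜ ⊂ Sᶜ :=
        ⟨himg, fun hsub => hne1 (hsub h1S)⟩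
      have := Set.ncard_lt_ncard hssub hfin
      rwa [Set.ncard_image_of_injective _ (add_left_injective m)] at this
    obtain ⟨n', y', hseq', hS'eq, _⟩ :=
      ih S' ⟨h0', hadd', hfin'⟩ hArf' (by omega)
    set y : ℕ → ℕ := fun i => if i = n' then m else y' i with hydef
    have hagree : ∀ i < n', y i = y' i := by
      intro i hi
      simp only [hydef]
      rw [if_neg (by omega)]
    have hyn : y n' = m := by simp [hydef]
    have hS'y : S' = arfSetN n' y := by
      rw [arfSetN_congr hagree]
      exact hS'eq
    have hmS' : m ∈ S' := by
      show m + m ∈ S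
      exact hadd m hm.1 m hm.1
    have hmem : y n' ∈ arfSetN n' y := by
      rw [hyn, ← hS'y]
      exact hmS'
    have h2y : 2 ≤ y n' := by rw [hyn]; exact hm2
    have hmono : ∀ i < n', y i ≤ y n' := by
      intro i hi
      rw [hyn, hagree i hi]
      have hmarf : m ∈ arfSetN n' y' := by rw [← hS'eq]; exact hmS'
      exact le_of_mem_arfSetN hseq'.1 hmarf (by omega) hi
    have hseq : ArfSeqN (n' + 1) y :=
      arfSeqN_construct (ArfSeqN_congr (fun i hi => (hagree i hi).symm) hseq')
        h2y hmono hmem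
    refine ⟨n' + 1, y, hseq, ?_, Or.inr (by omega)⟩
    rw [arfSetN_succ, hyn, ← hS'y]
    exact hdecomp

end Part2

section Part3

variable {n : ℕ} {x : Fin n → ℕ} {y : ℕ → ℕ}

lemma sum_map_val (hxy : ∀ i : Fin n, x i = y i.1) (s : Finset (Fin n)) :
    ∑ i ∈ s, x i = ∑ i ∈ s.map Fin.valEmbedding, y i := by
  rw [Finset.sum_map]
  exact Finset.sum_congr rfl fun i _ => hxy i

lemma sum_Ici_eq (hxy : ∀ i : Fin n, x i = y i.1) (k : Fin n) :
    ∑ i ∈ Finset.Ici k, x i = ∑ i ∈ Finset.Ico k.1 n, y i := by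
  rw [sum_map_val hxy, Fin.map_valEmbedding_Ici]

lemma sum_univ_eq (hxy : ∀ i : Fin n, x i = y i.1) :
    ∑ i, x i = ∑ i ∈ Finset.range n, y i := by
  have : ∀ i : Fin n, x i = y i.1 := hxy
  calc ∑ i, x i = ∑ i : Fin n, y i.1 := Finset.sum_congr rfl fun i _ => hxy i
    _ = ∑ i ∈ Finset.range n, y i := Fin.sum_univ_eq_sum_range (fun i => y i) n

lemma sum_Icc_eq (hxy : ∀ i : Fin n, x i = y i.1) (j i : Fin n) :
    ∑ k ∈ Finset.Icc j i, x k = ∑ k ∈ Finset.Icc j.1 i.1, y k := by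
  rw [sum_map_val hxy, Fin.map_valEmbedding_Icc]

lemma sum_Iic_eq (hxy : ∀ i : Fin n, x i = y i.1) (i : Fin n) :
    ∑ k ∈ Finset.Iic i, x k = ∑ k ∈ Finset.Iic i.1, y k := by
  rw [sum_map_val hxy, Fin.map_valEmbedding_Iic]

lemma arfSet_eq_arfSetN (hxy : ∀ i : Fin n, x i = y i.1) :
    arfSet n x = arfSetN n y := by
  ext z
  simp only [arfSet, arfSetN, Set.mem_setOf_eq]
  rw [sum_univ_eq hxy]
  constructor <;> rintro (h0 | hmid | hge)
  · exact Or.inl h0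
  · obtain ⟨k, hz⟩ := hmid
    exact Or.inr (Or.inl ⟨k.1, k.isLt, by rw [hz, sum_Ici_eq hxy]⟩)
  · exact Or.inr (Or.inr hge)
  · exact Or.inl h0
  · obtain ⟨k, hk, hz⟩ := hmid
    exact Or.inr (Or.inl ⟨⟨k, hk⟩, by rw [hz, sum_Ici_eq hxy]⟩)
  · exact Or.inr (Or.inr hge)

lemma arfSeq_iff_arfSeqN (hxy : ∀ i : Fin n, x i = y i.1) :
    ArfSeq n x ↔ 1 ≤ n ∧ ArfSeqN n y := by
  constructor
  · rintro ⟨h1, hmono, h2, hcond⟩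
    refine ⟨h1, ?_, ?_, ?_⟩
    · intro i j hij hj
      rw [← hxy ⟨i, by omega⟩, ← hxy ⟨j, hj⟩]
      exact hmono (show (⟨i, by omega⟩ : Fin n) ≤ ⟨j, hj⟩ from hij)
    · intro i hi
      rw [← hxy ⟨i, hi⟩]
      exact h2 ⟨i, hi⟩
    · intro i hi
      rcases hcond ⟨i, by omega⟩ hi with ⟨j, hj, hsum⟩ | hge
      · refine Or.inl ⟨j.1, hj, ?_⟩
        calc y (i+1) = x ⟨i+1, hi⟩ := (hxy ⟨i+1, hi⟩).symm
          _ = ∑ k ∈ Finset.Icc j ⟨i, by omega⟩, x k := hsum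
          _ = ∑ k ∈ Finset.Icc j.1 i, y k := sum_Icc_eq hxy j ⟨i, by omega⟩
      · refine Or.inr ?_
        calc ∑ k ∈ Finset.Iic i, y k
            = ∑ k ∈ Finset.Iic (⟨i, by omega⟩ : Fin n), x k :=
              (sum_Iic_eq hxy ⟨i, by omega⟩).symm
          _ ≤ x ⟨i+1, hi⟩ := hge
          _ = y (i+1) := hxy ⟨i+1, hi⟩
  · rintro ⟨h1, hmono, h2, hcond⟩
    refine ⟨h1, ?_, ?_, ?_⟩
    · intro i j hij
      rw [hxy i, hxy j]
      exact hmono i.1 j.1 hij j.isLt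
    · intro i
      rw [hxy i]
      exact h2 i.1 i.isLt
    · intro i hi
      rcases hcond i.1 hi with ⟨j, hj, hsum⟩ | hge
      · refine Or.inl ⟨⟨j, by omega⟩, hj, ?_⟩
        rw [hxy, sum_Icc_eq hxy]
        exact hsum
      · refine Or.inr ?_
        rw [hxy ⟨i.1+1, hi⟩, sum_Iic_eq hxy]
        exact hge

end Part3

theorem arf_iff_arfSeq (S : Set ℕ) (hne : S.Nonempty) (hproper : S ≠ Set.univ) :
    (IsNumericalSemigroup S ∧ HasArfProperty S) ↔
      ∃ (n : ℕ) (x : Fin n → ℕ), ArfSeq n x ∧ S = arfSet n x := by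
  constructor
  · rintro ⟨hNS, hArf⟩
    obtain ⟨n, y, hseq, hSeq, hor⟩ := exists_rep_aux (Sᶜ.ncard) S hNS hArf le_rfl
    have hn : 1 ≤ n := hor.resolve_left hproper
    refine ⟨n, fun i => y i.1, ?_, ?_⟩
    · exact (arfSeq_iff_arfSeqN (fun i => rfl)).mpr ⟨hn, hseq⟩
    · rw [hSeq, arfSet_eq_arfSetN (x := fun i => y i.1) (fun i => rfl)]
  · rintro ⟨n, x, hseq, rfl⟩
    set y : ℕ → ℕ := fun i => if h : i < n then x ⟨i, h⟩ else 0 with hydef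
    have hxy : ∀ i : Fin n, x i = y i.1 := by
      intro i
      simp only [hydef, i.isLt, dif_pos, Fin.eta]
    rw [arfSet_eq_arfSetN hxy]
    obtain ⟨hn, hseqN⟩ := (arfSeq_iff_arfSeqN hxy).mp hseq
    exact arfSetN_is_arf n y hseqN
end

section
/- Let (x_1, …, x_n) be an Arf sequence. Then the set S(x_1, …, x_n) is a numerical semigroup whose Frobenius number equals x_1 + ⋯ + x_n − 1 (equivalently, whose conductor equals x_1 + ⋯ + x_n), and whose genus equals x_1 + ⋯ + x_n − n. -/
namespace ArfAux

/-- extension of `x` to ℕ -/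
def xe (n : ℕ) (x : Fin n → ℕ) (i : ℕ) : ℕ := if h : i < n then x ⟨i, h⟩ else 0

/-- truncated arf set -/
def A (n : ℕ) (x : Fin n → ℕ) (j : ℕ) : Set ℕ :=
  {z | z = 0 ∨ (∃ k, k < j ∧ z = ∑ i ∈ Finset.Ico k j, xe n x i) ∨
    (∑ i ∈ Finset.range j, xe n x i) ≤ z}

variable {n : ℕ} {x : Fin n → ℕ}

lemma xe_eq (i : Fin n) : xe n x i.1 = x i := by simp [xe]

lemma two_le_xe (hx : ArfSeq n x) {i : ℕ} (hi : i < n) : 2 ≤ xe n x i := by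
  rw [show i = (⟨i, hi⟩ : Fin n).1 from rfl, xe_eq]
  exact hx.2.2.1 _

lemma sum_fin (s : Finset (Fin n)) :
    ∑ k ∈ s, x k = ∑ i ∈ s.map Fin.valEmbedding, xe n x i := by
  rw [Finset.sum_map]
  exact (Finset.sum_congr rfl fun i _ => (xe_eq i).symm)

lemma sum_Icc_eq (a b : Fin n) :
    ∑ k ∈ Finset.Icc a b, x k = ∑ i ∈ Finset.Ico a.1 (b.1 + 1), xe n x i := by
  rw [sum_fin, Fin.map_valEmbedding_Icc, Finset.Ico_add_one_right_eq_Icc]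

lemma sum_Iic_eq (b : Fin n) :
    ∑ k ∈ Finset.Iic b, x k = ∑ i ∈ Finset.range (b.1 + 1), xe n x i := by
  rw [sum_fin, Fin.map_valEmbedding_Iic]
  congr 1
  ext i; simp

lemma sum_Ici_eq (a : Fin n) :
    ∑ k ∈ Finset.Ici a, x k = ∑ i ∈ Finset.Ico a.1 n, xe n x i := by
  rw [sum_fin, Fin.map_valEmbedding_Ici]

lemma sum_univ_eq :
    ∑ i, x i = ∑ i ∈ Finset.range n, xe n x i := by
  rw [sum_fin, Fin.map_valEmbedding_univ]
  congr 1
  ext i; simp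

lemma A_shift {j w : ℕ} (hw : w ∈ A n x j) : xe n x j + w ∈ A n x (j + 1) := by
  rcases hw with h0 | ⟨k, hk, hk2⟩ | h3
  · right; left
    refine ⟨j, Nat.lt_succ_self j, ?_⟩
    rw [Finset.sum_Ico_succ_top (le_refl j)]
    simp [h0]
  · right; left
    refine ⟨k, hk.trans (Nat.lt_succ_self j), ?_⟩
    rw [Finset.sum_Ico_succ_top (le_of_lt hk), ← hk2]
    omega
  · right; right
    rw [Finset.sum_range_succ]
    omega

lemma A_unshift {j z : ℕ} (hz : z ∈ A n x (j + 1)) :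
    z = 0 ∨ ∃ w ∈ A n x j, z = xe n x j + w := by
  rcases hz with h0 | ⟨k, hk, hk2⟩ | h3
  · exact Or.inl h0
  · right
    rcases Nat.lt_succ_iff_lt_or_eq.mp hk with hk' | rfl
    · exact ⟨∑ i ∈ Finset.Ico k j, xe n x i, Or.inr (Or.inl ⟨k, hk', rfl⟩),
        by rw [hk2, Finset.sum_Ico_succ_top (le_of_lt hk')]; omega⟩
    · exact ⟨0, Or.inl rfl, by rw [hk2, Finset.sum_Ico_succ_top (le_refl k)]; simp⟩
  · right
    rw [Finset.sum_range_succ] at h3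
    exact ⟨z - xe n x j, Or.inr (Or.inr (by omega)), by omega⟩

lemma xe_mem_A (hx : ArfSeq n x) {j : ℕ} (hj : j < n) : xe n x j ∈ A n x j := by
  rcases Nat.eq_zero_or_pos j with rfl | hj0
  · exact Or.inr (Or.inr (by simp))
  · have hj1 : j - 1 < n := by omega
    have h : (⟨j - 1, hj1⟩ : Fin n).1 + 1 < n := by simp only [Fin.val_mk]; omega
    have hi1 : (⟨j - 1, hj1⟩ : Fin n).1 = j - 1 := rfl
    have heq : (⟨(⟨j - 1, hj1⟩ : Fin n).1 + 1, h⟩ : Fin n) = ⟨j, hj⟩ := by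
      apply Fin.ext; simp only [Fin.val_mk]; omega
    have hxe : xe n x j = x ⟨(⟨j - 1, hj1⟩ : Fin n).1 + 1, h⟩ := by
      rw [heq]; exact xe_eq ⟨j, hj⟩
    rcases hx.2.2.2 ⟨j - 1, hj1⟩ h with ⟨j', hj', hsum⟩ | hge
    · right; left
      have hv : j'.1 ≤ j - 1 := Fin.le_def.mp hj'
      refine ⟨j'.1, by omega, ?_⟩
      have hu : (⟨j - 1, hj1⟩ : Fin n).1 + 1 = j := by omega
      rw [hxe, hsum, sum_Icc_eq, hu]
    · right; right
      rw [sum_Iic_eq] at hge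
      rw [hxe]
      have hr : Finset.range j = Finset.range ((⟨j - 1, hj1⟩ : Fin n).1 + 1) := by
        rw [hi1]; congr 1; omega
      rw [hr]; exact hge

lemma A_closed (hx : ArfSeq n x) : ∀ j, j ≤ n → ∀ a ∈ A n x j, ∀ b ∈ A n x j, a + b ∈ A n x j := by
  intro j
  induction j with
  | zero => intro _ a _ b _; exact Or.inr (Or.inr (by simp))
  | succ j ih =>
    intro hj a ha b hb
    have ihj := ih (by omega)
    rcases A_unshift ha with rfl | ⟨a', ha', rfl⟩
    · simpa using hb
    rcases A_unshift hb with rfl | ⟨b', hb', rfl⟩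
    · simpa using ha
    have hm := xe_mem_A hx (show j < n by omega)
    have harith : xe n x j + a' + (xe n x j + b') = xe n x j + (a' + (xe n x j + b')) := by omega
    rw [harith]
    exact A_shift (ihj _ ha' _ (ihj _ hm _ hb'))

lemma arfSet_eq : arfSet n x = A n x n := by
  ext z
  simp only [arfSet, A, Set.mem_setOf_eq]
  constructor
  · rintro (h0 | ⟨k, rfl⟩ | h3)
    · exact Or.inl h0
    · exact Or.inr (Or.inl ⟨k.1, k.isLt, sum_Ici_eq k⟩)
    · exact Or.inr (Or.inr (by rwa [← sum_univ_eq]))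
  · rintro (h0 | ⟨k, hk, rfl⟩ | h3)
    · exact Or.inl h0
    · exact Or.inr (Or.inl ⟨⟨k, hk⟩, (sum_Ici_eq ⟨k, hk⟩).symm⟩)
    · exact Or.inr (Or.inr (by rwa [sum_univ_eq]))

lemma arfSet_closed (hx : ArfSeq n x) :
    ∀ a ∈ arfSet n x, ∀ b ∈ arfSet n x, a + b ∈ arfSet n x := by
  rw [arfSet_eq]
  exact A_closed hx n le_rfl

end ArfAux

namespace ArfAux
variable {n : ℕ} {x : Fin n → ℕ}

lemma two_le_sum (hx : ArfSeq n x) : 2 ≤ ∑ i ∈ Finset.range n, xe n x i := by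
  have hn := hx.1
  have h2 := two_le_xe hx (show 0 < n by omega)
  have h0 : xe n x 0 ≤ ∑ i ∈ Finset.range n, xe n x i :=
    Finset.single_le_sum (fun i _ => Nat.zero_le _) (Finset.mem_range.mpr (by omega))
  omega

lemma tail_lt (hx : ArfSeq n x) {k : ℕ} (h1 : 1 ≤ k) (h2 : k < n) :
    ∑ i ∈ Finset.Ico k n, xe n x i + 2 ≤ ∑ i ∈ Finset.range n, xe n x i := by
  have hsplit : ∑ i ∈ Finset.Ico 0 k, xe n x i + ∑ i ∈ Finset.Ico k n, xe n x i
      = ∑ i ∈ Finset.Ico 0 n, xe n x i :=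
    Finset.sum_Ico_consecutive _ (Nat.zero_le k) (le_of_lt h2)
  have h0 : xe n x 0 ≤ ∑ i ∈ Finset.Ico 0 k, xe n x i :=
    Finset.single_le_sum (fun i _ => Nat.zero_le _) (Finset.mem_Ico.mpr ⟨le_rfl, h1⟩)
  have h2' : 2 ≤ xe n x 0 := two_le_xe hx (by omega)
  rw [Finset.range_eq_Ico]
  omega

lemma tail_strict (hx : ArfSeq n x) {a b : ℕ} (hab : a < b) (hb : b ≤ n) :
    ∑ i ∈ Finset.Ico b n, xe n x i < ∑ i ∈ Finset.Ico a n, xe n x i := by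
  have hsplit : ∑ i ∈ Finset.Ico a b, xe n x i + ∑ i ∈ Finset.Ico b n, xe n x i
      = ∑ i ∈ Finset.Ico a n, xe n x i :=
    Finset.sum_Ico_consecutive _ (le_of_lt hab) hb
  have h0 : xe n x a ≤ ∑ i ∈ Finset.Ico a b, xe n x i :=
    Finset.single_le_sum (fun i _ => Nat.zero_le _) (Finset.mem_Ico.mpr ⟨le_rfl, hab⟩)
  have h2' : 2 ≤ xe n x a := two_le_xe hx (by omega)
  omega

lemma T_sub_one_not_mem (hx : ArfSeq n x) : (∑ i, x i) - 1 ∉ arfSet n x := by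
  have hn := hx.1
  have h2T := two_le_sum hx
  have hr : ∑ i ∈ Finset.Ico 0 n, xe n x i = ∑ i ∈ Finset.range n, xe n x i := by
    rw [Finset.range_eq_Ico]
  rw [sum_univ_eq (x := x)]
  rintro (h0 | ⟨k, hk⟩ | h3)
  · omega
  · rw [sum_Ici_eq] at hk
    rcases Nat.eq_zero_or_pos k.1 with hk0 | hk1
    · rw [hk0] at hk
      omega
    · have := tail_lt hx hk1 k.isLt
      omega
  · rw [sum_univ_eq (x := x)] at h3
    omega

lemma genus_eq (hx : ArfSeq n x) : (arfSet n x)ᶜ.ncard = (∑ i, x i) - n := by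
  classical
  have hn := hx.1
  have h2T := two_le_sum hx
  rw [sum_univ_eq (x := x)]
  set T := ∑ i ∈ Finset.range n, xe n x i with hT
  have hge : ∀ z, T ≤ z → z ∈ arfSet n x := fun z h =>
    Or.inr (Or.inr (by rw [sum_univ_eq (x := x)]; exact h))
  have hcompl : (arfSet n x)ᶜ
      = ↑((Finset.range T).filter (fun z => z ∉ arfSet n x)) := by
    ext z
    simp only [Set.mem_compl_iff, Finset.coe_filter, Finset.mem_range, Set.mem_setOf_eq]
    constructor
    · intro hz
      refine ⟨?_, hz⟩
      by_contra hge'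
      push_neg at hge'
      exact hz (hge z hge')
    · exact fun h => h.2
  rw [hcompl, Set.ncard_coe_finset]
  have hsplit := Finset.card_filter_add_card_filter_not
    (s := Finset.range T) (p := fun z => z ∈ arfSet n x)
  have hmemcard : ((Finset.range T).filter (fun z => z ∈ arfSet n x)).card = n := by
    have himg : (Finset.range T).filter (fun z => z ∈ arfSet n x)
        = insert 0 ((Finset.Ico 1 n).image (fun k => ∑ i ∈ Finset.Ico k n, xe n x i)) := by
      ext z
      simp only [Finset.mem_filter, Finset.mem_range, Finset.mem_insert, Finset.mem_image,
        Finset.mem_Ico]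
      constructor
      · rintro ⟨hzT, h0 | ⟨k, rfl⟩ | h3⟩
        · exact Or.inl h0
        · rw [sum_Ici_eq] at hzT ⊢
          rcases Nat.eq_zero_or_pos k.1 with hk0 | hk1
          · exfalso
            rw [hk0] at hzT
            have : ∑ i ∈ Finset.Ico 0 n, xe n x i = T := by
              rw [hT, Finset.range_eq_Ico]
            omega
          · exact Or.inr ⟨k.1, ⟨hk1, k.isLt⟩, rfl⟩
        · exfalso
          rw [sum_univ_eq (x := x)] at h3
          omega
      · rintro (rfl | ⟨k, ⟨hk1, hkn⟩, rfl⟩)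
        · exact ⟨by omega, Or.inl rfl⟩
        · refine ⟨by have := tail_lt hx hk1 hkn; omega, ?_⟩
          exact Or.inr (Or.inl ⟨⟨k, hkn⟩, (sum_Ici_eq ⟨k, hkn⟩).symm⟩)
    rw [himg, Finset.card_insert_of_notMem, Finset.card_image_of_injOn, Nat.card_Ico]
    · omega
    · intro a ha b hb hab
      simp only [Finset.coe_Ico, Set.mem_Ico] at ha hb
      rcases lt_trichotomy a b with h | h | h
      · exact absurd hab (ne_of_gt (tail_strict hx h (le_of_lt hb.2)))
      · exact h
      · exact absurd hab (ne_of_lt (tail_strict hx h (le_of_lt ha.2)))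
    · intro hmem
      simp only [Finset.mem_image, Finset.mem_Ico] at hmem
      obtain ⟨k, ⟨hk1, hkn⟩, hk0⟩ := hmem
      have h0 : xe n x k ≤ ∑ i ∈ Finset.Ico k n, xe n x i :=
        Finset.single_le_sum (fun i _ => Nat.zero_le _) (Finset.mem_Ico.mpr ⟨le_rfl, hkn⟩)
      have := two_le_xe hx hkn
      omega
  have hcard : (Finset.range T).card = T := Finset.card_range T
  omega

end ArfAux

theorem arfSet_isNumericalSemigroup_frobenius_genus'
    (n : ℕ) (x : Fin n → ℕ) (hx : ArfSeq n x) :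
    IsNumericalSemigroup (arfSet n x) ∧
    (sSup {m | m ∉ arfSet n x}) = (∑ i, x i) - 1 ∧
    (sInf {c | ∀ m, c ≤ m → m ∈ arfSet n x}) = ∑ i, x i ∧
    (arfSet n x)ᶜ.ncard = (∑ i, x i) - n := by
  have hn := hx.1
  have h2T : 2 ≤ ∑ i, x i := by
    rw [ArfAux.sum_univ_eq (x := x)]; exact ArfAux.two_le_sum hx
  have hge : ∀ z, (∑ i, x i) ≤ z → z ∈ arfSet n x := fun z h => Or.inr (Or.inr h)
  have hnm := ArfAux.T_sub_one_not_mem hx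
  refine ⟨⟨Or.inl rfl, ArfAux.arfSet_closed hx, ?_⟩, ?_, ?_, ArfAux.genus_eq hx⟩
  · apply Set.Finite.subset (Set.finite_Iio (∑ i, x i))
    intro z hz
    simp only [Set.mem_compl_iff] at hz
    simp only [Set.mem_Iio]
    by_contra h
    push_neg at h
    exact hz (hge z h)
  · have hub : ∀ z ∈ {m | m ∉ arfSet n x}, z ≤ (∑ i, x i) - 1 := by
      intro z hz
      simp only [Set.mem_setOf_eq] at hz
      by_contra h
      push_neg at h
      exact hz (hge z (by omega))
    apply le_antisymm
    · exact csSup_le ⟨_, hnm⟩ hub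
    · exact le_csSup ⟨_, hub⟩ hnm
  · apply le_antisymm
    · exact Nat.sInf_le (fun m hm => hge m hm)
    · refine le_csInf ⟨∑ i, x i, fun m hm => hge m hm⟩ ?_
      intro c hc
      by_contra hlt
      push_neg at hlt
      exact hnm (hc _ (by omega))

theorem arfSet_isNumericalSemigroup_frobenius_genus
    (n : ℕ) (x : Fin n → ℕ) (hx : ArfSeq n x) :
    IsNumericalSemigroup (arfSet n x) ∧
    frobeniusOf (arfSet n x) = (∑ i, x i) - 1 ∧
    conductorOf (arfSet n x) = ∑ i, x i ∧
    genusOf (arfSet n x) = (∑ i, x i) - n := by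
  exact ⟨(arfSet_isNumericalSemigroup_frobenius_genus' n x hx).1,
    (arfSet_isNumericalSemigroup_frobenius_genus' n x hx).2.1,
    (arfSet_isNumericalSemigroup_frobenius_genus' n x hx).2.2.1,
    (arfSet_isNumericalSemigroup_frobenius_genus' n x hx).2.2.2⟩
end

section
/- The map sending an Arf sequence (x_1, …, x_n) to the set S(x_1, …, x_n) is a bijection from the set of all Arf sequences onto the set of all numerical semigroups with the Arf property that are different from ℕ. -/
/-- A good chain: s 0 = 0, gaps ≥ 2, gaps non-increasing, and the Arf-sequence
condition `2 s(p+1) - s p ∈ chain` for 1 ≤ p+1 ≤ n-1. -/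
def ChainGood (n : ℕ) (s : ℕ → ℕ) : Prop :=
  s 0 = 0 ∧
  (∀ p, p < n → s p + 2 ≤ s (p + 1)) ∧
  (∀ p, p + 1 < n → s (p + 2) + s p ≤ 2 * s (p + 1)) ∧
  (∀ p, p + 2 ≤ n →
    (∃ q, p + 1 < q ∧ q ≤ n ∧ s q + s p = 2 * s (p + 1)) ∨ s n + s p ≤ 2 * s (p + 1))

def chainSet (n : ℕ) (s : ℕ → ℕ) : Set ℕ :=
  {z | (∃ p, p ≤ n ∧ z = s p) ∨ s n ≤ z}

lemma chain_mono {n : ℕ} {s : ℕ → ℕ} (h : ∀ p, p < n → s p + 2 ≤ s (p + 1)) :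
    ∀ {p q}, p ≤ q → q ≤ n → s p + 2 * (q - p) ≤ s q := by
  intro p q hpq hqn
  induction q with
  | zero => have : p = 0 := by omega
            subst this; omega
  | succ q ih =>
    rcases Nat.eq_or_lt_of_le hpq with h1 | h1
    · subst h1; omega
    · have := ih (by omega) (by omega)
      have := h q (by omega)
      omega

lemma chain_mono' {n : ℕ} {s : ℕ → ℕ} (h : ∀ p, p < n → s p + 2 ≤ s (p + 1))
    {p q : ℕ} (hpq : p ≤ q) (hqn : q ≤ n) : s p ≤ s q := by
  have := chain_mono h hpq hqn; omega

/-- Gap antitonicity in general form: for p ≤ q < n,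
    s(q+1) - s(q) ≤ s(p+1) - s(p). -/
lemma chain_gap_anti {n : ℕ} {s : ℕ → ℕ}
    (h : ∀ p, p + 1 < n → s (p + 2) + s p ≤ 2 * s (p + 1)) :
    ∀ {p q}, p ≤ q → q < n → s (q + 1) + s p ≤ s q + s (p + 1) := by
  intro p q hpq hqn
  induction q with
  | zero => have : p = 0 := by omega
            subst this; omega
  | succ q ih =>
    rcases Nat.eq_or_lt_of_le hpq with h1 | h1
    · subst h1; omega
    · have h2 := ih (by omega) (by omega)
      have h3 := h q (by omega)
      have : q + 1 + 1 = q + 2 := rfl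
      rw [this]
      omega

lemma chainGood_shift {n : ℕ} {s : ℕ → ℕ} (hg : ChainGood (n + 1) s) :
    ChainGood n (fun p => s (p + 1) - s 1) := by
  obtain ⟨h0, hgap, hanti, hH⟩ := hg
  have M : ∀ {p q}, p ≤ q → q ≤ n + 1 → s p ≤ s q := fun h1 h2 => chain_mono' hgap h1 h2
  refine ⟨by simp, ?_, ?_, ?_⟩
  · intro p hp
    have h1 : s (p + 1) + 2 ≤ s (p + 2) := hgap (p + 1) (by omega)
    have h2 : s 1 ≤ s (p + 1) := M (by omega) (by omega)
    show s (p + 1) - s 1 + 2 ≤ s (p + 2) - s 1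
    omega
  · intro p hp
    have h1 : s (p + 3) + s (p + 1) ≤ 2 * s (p + 2) := hanti (p + 1) (by omega)
    have h2 : s 1 ≤ s (p + 1) := M (by omega) (by omega)
    have h3 : s (p + 1) ≤ s (p + 2) := M (by omega) (by omega)
    have h4 : s (p + 2) ≤ s (p + 3) := M (by omega) (by omega)
    show s (p + 3) - s 1 + (s (p + 1) - s 1) ≤ 2 * (s (p + 2) - s 1)
    omega
  · intro p hp
    rcases hH (p + 1) (by omega) with ⟨q, hq1, hq2, heq⟩ | hge
    · refine Or.inl ⟨q - 1, by omega, by omega, ?_⟩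
      have heq' : s q + s (p + 1) = 2 * s (p + 2) := heq
      have h2 : s 1 ≤ s (p + 1) := M (by omega) (by omega)
      have h3 : s 1 ≤ s q := M (by omega) (by omega)
      have h4 : s 1 ≤ s (p + 2) := M (by omega) (by omega)
      have h5 : s (p + 1) ≤ s (p + 2) := M (by omega) (by omega)
      show s (q - 1 + 1) - s 1 + (s (p + 1) - s 1) = 2 * (s (p + 2) - s 1)
      rw [show q - 1 + 1 = q by omega]
      omega
    · refine Or.inr ?_
      have hge' : s (n + 1) + s (p + 1) ≤ 2 * s (p + 2) := hge
      have h2 : s 1 ≤ s (p + 1) := M (by omega) (by omega)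
      have h4 : s 1 ≤ s (p + 2) := M (by omega) (by omega)
      have h5 : s 1 ≤ s (n + 1) := M (by omega) (by omega)
      show s (n + 1) - s 1 + (s (p + 1) - s 1) ≤ 2 * (s (p + 2) - s 1)
      omega

theorem chain_arf : ∀ (n : ℕ) (s : ℕ → ℕ), ChainGood n s →
    ∀ i j k, k ≤ j → j ≤ i → i ≤ n → s i + s j - s k ∈ chainSet n s := by
  intro n
  induction n with
  | zero =>
    intro s hg i j k hkj hji hin
    have : i = 0 := by omega
    have : j = 0 := by omega
    have : k = 0 := by omega
    subst_vars
    exact Or.inr (by omega)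
  | succ n IH =>
    intro s hg i j k hkj hji hin
    obtain ⟨h0, hgap, hanti, hH⟩ := hg
    have M : ∀ {p q}, p ≤ q → q ≤ n + 1 → s p ≤ s q := fun h1 h2 => chain_mono' hgap h1 h2
    have IH' := IH (fun p => s (p + 1) - s 1) (chainGood_shift ⟨h0, hgap, hanti, hH⟩)
    have claim1 : ∀ i j k, 1 ≤ k → k ≤ j → j ≤ i → i ≤ n + 1 →
        s i + s j - s k ∈ chainSet (n + 1) s := by
      intro i j k hk hkj hji hin
      have h := IH' (i - 1) (j - 1) (k - 1) (by omega) (by omega) (by omega)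
      simp only [chainSet, Set.mem_setOf_eq] at h ⊢
      rw [show i - 1 + 1 = i by omega, show j - 1 + 1 = j by omega,
        show k - 1 + 1 = k by omega] at h
      have m1 : s 1 ≤ s k := M (by omega) (by omega)
      have m2 : s k ≤ s j := M hkj (by omega)
      have m3 : s j ≤ s i := M hji (by omega)
      rcases h with ⟨q, hq, heq⟩ | hge
      · have m4 : s 1 ≤ s (q + 1) := M (by omega) (by omega)
        exact Or.inl ⟨q + 1, by omega, by omega⟩
      · have m5 : s 1 ≤ s (n + 1) := M (by omega) (by omega)
        exact Or.inr (by omega)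
    have claimA : ∀ i, 1 ≤ i → i ≤ n + 1 → s i + s 1 ∈ chainSet (n + 1) s := by
      intro i hi hin
      have m1 : s 1 ≤ s i := M hi hin
      rcases Nat.eq_zero_or_pos n with hn | hn
      · subst hn
        have : i = 1 := by omega
        subst this
        exact Or.inr (show s 1 ≤ s 1 + s 1 by omega)
      · rcases hH 0 (by omega) with ⟨q, hq1, hq2, heq⟩ | hge
        · have heq2 : s q + s 0 = 2 * s 1 := heq
          rw [h0] at heq2
          clear heq; rename' heq2 => heq
          rcases le_total i q with hiq | hqi
          · have h := claim1 q i 1 (by omega) (by omega) hiq hq2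
            have e : s i + s 1 = s q + s i - s 1 := by omega
            rw [e]; exact h
          · have h := claim1 i q 1 (by omega) (by omega) hqi hin
            have e : s i + s 1 = s i + s q - s 1 := by omega
            rw [e]; exact h
        · have hge2 : s (n + 1) + s 0 ≤ 2 * s 1 := hge
          rw [h0] at hge2
          exact Or.inr (by omega)
    have claimB : ∀ i j, 1 ≤ j → j ≤ i → i ≤ n + 1 → s i + s j ∈ chainSet (n + 1) s := by
      intro i j hj hji hin
      have m1 : s 1 ≤ s j := M hj (by omega)
      have m2 : s j ≤ s i := M hji hin
      have h := claim1 i j 1 (le_refl 1) hj hji hin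
      rcases h with ⟨q, hq, heq⟩ | hge
      · have hs1 : s 0 + 2 ≤ s 1 := hgap 0 (by omega)
        have hq1 : 1 ≤ q := by
          rcases Nat.eq_zero_or_pos q with h | h
          · subst h; omega
          · exact h
        have h2 := claimA q hq1 hq
        have e : s i + s j = s q + s 1 := by omega
        rw [e]; exact h2
      · exact Or.inr (by omega)
    -- main goal
    rcases Nat.eq_zero_or_pos k with hk | hk
    · subst hk
      rw [h0, Nat.sub_zero]
      rcases Nat.eq_zero_or_pos j with hj | hj
      · subst hj
        rw [h0, Nat.add_zero]
        exact Or.inl ⟨i, hin, rfl⟩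
      · exact claimB i j hj hji hin
    · exact claim1 i j k hk hkj hji hin

def tosum (n : ℕ) (x : Fin n → ℕ) : ℕ → ℕ :=
  fun p => ∑ i ∈ Finset.univ.filter (fun i : Fin n => n - p ≤ i.1), x i

variable {n : ℕ} {x : Fin n → ℕ}

lemma tosum_zero : tosum n x 0 = 0 := by
  unfold tosum
  rw [Finset.filter_false_of_mem, Finset.sum_empty]
  intro i _
  have := i.2
  omega

lemma tosum_top {p : ℕ} (hp : n ≤ p) : tosum n x p = ∑ i, x i := by
  unfold tosum
  congr 1
  rw [Finset.filter_true_of_mem]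
  intro i _
  omega

lemma tosum_Ici (k : Fin n) : ∑ i ∈ Finset.Ici k, x i = tosum n x (n - k.1) := by
  unfold tosum
  apply Finset.sum_congr
  · ext i
    simp only [Finset.mem_Ici, Finset.mem_filter, Finset.mem_univ, true_and, Fin.le_def]
    have := k.2
    omega
  · intros; rfl

lemma sum_Icc_add (j i : Fin n) (hji : j ≤ i) :
    tosum n x (n - i.1 - 1) + ∑ k ∈ Finset.Icc j i, x k = tosum n x (n - j.1) := by
  unfold tosum
  rw [← Finset.sum_union]
  · apply Finset.sum_congr
    · ext k
      simp only [Finset.mem_union, Finset.mem_filter, Finset.mem_univ, true_and,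
        Finset.mem_Icc, Fin.le_def]
      have h1 := k.2
      have h2 := i.2
      have h3 := j.2
      have h4 : j.1 ≤ i.1 := hji
      omega
    · intros; rfl
  · rw [Finset.disjoint_left]
    intro k hk hk2
    simp only [Finset.mem_filter, Finset.mem_univ, true_and] at hk
    simp only [Finset.mem_Icc, Fin.le_def] at hk2
    have h2 := i.2
    omega

lemma sum_Iic_add (i : Fin n) :
    tosum n x (n - i.1 - 1) + ∑ k ∈ Finset.Iic i, x k = tosum n x n := by
  unfold tosum
  rw [← Finset.sum_union]
  · apply Finset.sum_congr
    · ext k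
      simp only [Finset.mem_union, Finset.mem_filter, Finset.mem_univ, true_and,
        Finset.mem_Iic, Fin.le_def]
      have h1 := k.2
      have h2 := i.2
      omega
    · intros; rfl
  · rw [Finset.disjoint_left]
    intro k hk hk2
    simp only [Finset.mem_filter, Finset.mem_univ, true_and] at hk
    simp only [Finset.mem_Iic, Fin.le_def] at hk2
    have h2 := i.2
    omega

lemma tosum_step (p : ℕ) (hp : p < n) :
    tosum n x (p + 1) = x ⟨n - p - 1, by omega⟩ + tosum n x p := by
  have h := sum_Icc_add (x := x) ⟨n - p - 1, by omega⟩ ⟨n - p - 1, by omega⟩ le_rfl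
  rw [Finset.Icc_self, Finset.sum_singleton] at h
  simp only [Fin.val_mk] at h
  rw [show n - (n - p - 1) - 1 = p by omega, show n - (n - p - 1) = p + 1 by omega] at h
  omega

lemma tosum_mono_lemma (p : ℕ) (hp : p < n) (hx : ∀ i, 2 ≤ x i) :
    tosum n x p + 2 ≤ tosum n x (p + 1) := by
  rw [tosum_step p hp]
  have := hx ⟨n - p - 1, by omega⟩
  omega

attribute [irreducible] tosum

lemma chain_strictMono {n : ℕ} {s : ℕ → ℕ} (hg : ChainGood n s)
    {p q : ℕ} (hpq : p < q) (hqn : q ≤ n) : s p < s q := by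
  have := chain_mono hg.2.1 (le_of_lt hpq) hqn
  omega

/-- Value-level Arf property for chain sets. -/
lemma chainSet_arf {n : ℕ} {s : ℕ → ℕ} (hg : ChainGood n s) :
    ∀ a ∈ chainSet n s, ∀ b ∈ chainSet n s, ∀ c ∈ chainSet n s,
      c ≤ b → b ≤ a → a + b - c ∈ chainSet n s := by
  intro a ha b hb c hc hcb hba
  by_cases hbig : s n ≤ a
  · exact Or.inr (by omega)
  · push_neg at hbig
    obtain ⟨i, hin, rfl⟩ : ∃ p, p ≤ n ∧ a = s p := by
      rcases ha with h | h
      · exact h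
      · omega
    obtain ⟨j, hjn, rfl⟩ : ∃ p, p ≤ n ∧ b = s p := by
      rcases hb with h | h
      · exact h
      · omega
    obtain ⟨k, hkn, rfl⟩ : ∃ p, p ≤ n ∧ c = s p := by
      rcases hc with h | h
      · exact h
      · omega
    have hji : j ≤ i := by
      by_contra h
      push_neg at h
      exact absurd (chain_strictMono hg h hjn) (by omega)
    have hkj : k ≤ j := by
      by_contra h
      push_neg at h
      exact absurd (chain_strictMono hg h hkn) (by omega)
    exact chain_arf n s hg i j k hkj hji hin

lemma chainSet_zero {n : ℕ} {s : ℕ → ℕ} (hg : ChainGood n s) : 0 ∈ chainSet n s :=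
  Or.inl ⟨0, Nat.zero_le n, hg.1.symm⟩

lemma chainSet_add {n : ℕ} {s : ℕ → ℕ} (hg : ChainGood n s) :
    ∀ a ∈ chainSet n s, ∀ b ∈ chainSet n s, a + b ∈ chainSet n s := by
  intro a ha b hb
  rcases le_total b a with h | h
  · have := chainSet_arf hg a ha b hb 0 (chainSet_zero hg) (Nat.zero_le b) h
    simpa using this
  · have := chainSet_arf hg b hb a ha 0 (chainSet_zero hg) (Nat.zero_le a) h
    rw [Nat.add_comm]
    simpa using this

lemma chainSet_one_notmem {n : ℕ} {s : ℕ → ℕ} (hg : ChainGood n s) (hn : 1 ≤ n) :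
    1 ∉ chainSet n s := by
  have g1 : s 0 + 2 ≤ s 1 := hg.2.1 0 (by omega)
  rw [hg.1] at g1
  rintro (⟨p, hpn, hp⟩ | h)
  · rcases Nat.eq_zero_or_pos p with h0 | h0
    · subst h0; rw [hg.1] at hp; omega
    · have g2 : s 1 ≤ s p := chain_mono' hg.2.1 h0 hpn
      omega
  · have g2 : s 1 ≤ s n := chain_mono' hg.2.1 hn (le_refl n)
    omega

/-- The element below the conductor is not in the chain set. -/
lemma chainSet_pred_notmem {n : ℕ} {s : ℕ → ℕ} (hg : ChainGood n s) (hn : 1 ≤ n) :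
    s n - 1 ∉ chainSet n s := by
  have h2 : s (n - 1) + 2 ≤ s n := by
    have := hg.2.1 (n - 1) (by omega)
    rw [show n - 1 + 1 = n by omega] at this
    exact this
  rintro (⟨p, hpn, hp⟩ | h)
  · rcases Nat.lt_or_ge p n with h0 | h0
    · have := chain_mono hg.2.1 (show p ≤ n - 1 by omega) (by omega)
      omega
    · have : p = n := by omega
      subst this
      omega
  · omega

/-- Membership below the conductor implies being a chain element. -/
lemma chainSet_below {n : ℕ} {s : ℕ → ℕ} {z : ℕ} (hz : z ∈ chainSet n s) (hzn : z ≤ s n) :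
    ∃ p, p ≤ n ∧ z = s p := by
  rcases hz with h | h
  · exact h
  · exact ⟨n, le_refl n, by omega⟩

lemma chainGood_of_arfSeq {n : ℕ} {x : Fin n → ℕ} (hmono : Monotone x)
    (h2x : ∀ i, 2 ≤ x i)
    (hcond : ∀ i : Fin n, ∀ h : i.1 + 1 < n,
      (∃ j : Fin n, j ≤ i ∧ x ⟨i.1 + 1, h⟩ = ∑ k ∈ Finset.Icc j i, x k) ∨
      (∑ k ∈ Finset.Iic i, x k) ≤ x ⟨i.1 + 1, h⟩) :
    ChainGood n (tosum n x) := by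
  refine ⟨tosum_zero, fun p hp => tosum_mono_lemma p hp h2x, ?_, ?_⟩
  · intro p hp
    have e1 := tosum_step (x := x) p (by omega)
    have e2 : tosum n x (p + 2) = x ⟨n - (p + 1) - 1, by omega⟩ + tosum n x (p + 1) :=
      tosum_step (x := x) (p + 1) (by omega)
    have hm : x ⟨n - (p + 1) - 1, by omega⟩ ≤ x ⟨n - p - 1, by omega⟩ :=
      hmono (by rw [Fin.mk_le_mk]; omega)
    omega
  · intro p hp
    set i0 : Fin n := ⟨n - p - 2, by omega⟩ with hi0
    have hv : (i0 : ℕ) = n - p - 2 := rfl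
    have hlt : (i0 : ℕ) + 1 < n := by omega
    have e1 := tosum_step (x := x) p (by omega)
    have keyx : (⟨(i0 : ℕ) + 1, hlt⟩ : Fin n) = ⟨n - p - 1, by omega⟩ := by
      apply Fin.ext
      simp [hv]
      omega
    rcases hcond i0 hlt with ⟨j, hji, hsum⟩ | hbig
    · have hIcc := sum_Icc_add (x := x) j i0 hji
      rw [hv, show n - (n - p - 2) - 1 = p + 1 by omega] at hIcc
      have hjv : j.1 ≤ (i0 : ℕ) := hji
      have hj2 := j.2
      rw [hv] at hjv
      refine Or.inl ⟨n - j.1, by omega, by omega, ?_⟩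
      rw [keyx] at hsum
      omega
    · have hIic := sum_Iic_add (x := x) i0
      rw [hv, show n - (n - p - 2) - 1 = p + 1 by omega] at hIic
      rw [keyx] at hbig
      omega


lemma arfSet_eq_chainSet (n : ℕ) (x : Fin n → ℕ) :
    arfSet n x = chainSet n (tosum n x) := by
  ext z
  constructor
  · rintro (rfl | ⟨k, rfl⟩ | hbig)
    · exact Or.inl ⟨0, Nat.zero_le n, tosum_zero.symm⟩
    · exact Or.inl ⟨n - k.1, by omega, tosum_Ici k⟩
    · exact Or.inr (by rw [tosum_top le_rfl]; exact hbig)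
  · rintro (⟨p, hpn, rfl⟩ | hbig)
    · rcases Nat.eq_zero_or_pos p with rfl | hp
      · exact Or.inl (by rw [tosum_zero])
      · refine Or.inr (Or.inl ⟨⟨n - p, by omega⟩, ?_⟩)
        rw [tosum_Ici ⟨n - p, by omega⟩]
        congr 1
        show p = n - (n - p)
        omega
    · refine Or.inr (Or.inr ?_)
      rw [tosum_top le_rfl] at hbig
      exact hbig

lemma arf_mapsTo {n : ℕ} {x : Fin n → ℕ} (hx : ArfSeq n x) :
    IsNumericalSemigroup (arfSet n x) ∧ HasArfProperty (arfSet n x)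
      ∧ arfSet n x ≠ Set.univ := by
  obtain ⟨hn1, hmono, h2x, hcond⟩ := hx
  have hg := chainGood_of_arfSeq hmono h2x hcond
  rw [arfSet_eq_chainSet]
  refine ⟨⟨chainSet_zero hg, chainSet_add hg, ?_⟩, chainSet_arf hg, ?_⟩
  · apply Set.Finite.subset (Set.finite_Iio (tosum n x n))
    intro z hz
    rw [Set.mem_compl_iff] at hz
    rw [Set.mem_Iio]
    by_contra h
    exact hz (Or.inr (by omega))
  · intro h
    exact chainSet_one_notmem hg hn1 (h ▸ Set.mem_univ 1)

lemma chain_top_eq {n m : ℕ} {s t : ℕ → ℕ} (hs : ChainGood n s) (ht : ChainGood m t)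
    (hn : 1 ≤ n) (hm : 1 ≤ m) (h : chainSet n s = chainSet m t) : s n = t m := by
  by_contra hne
  rcases Nat.lt_or_ge (s n) (t m) with hlt | hge
  · have h1 : t m - 1 ∈ chainSet n s := Or.inr (by omega)
    rw [h] at h1
    exact chainSet_pred_notmem ht hm h1
  · have hlt : t m < s n := by omega
    have h1 : s n - 1 ∈ chainSet m t := Or.inr (by omega)
    rw [← h] at h1
    exact chainSet_pred_notmem hs hn h1

lemma chain_unique {n m : ℕ} {s t : ℕ → ℕ} (hs : ChainGood n s) (ht : ChainGood m t)
    (hn : 1 ≤ n) (hm : 1 ≤ m) (h : chainSet n s = chainSet m t) :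
    n = m ∧ ∀ p, p ≤ n → s p = t p := by
  have htop := chain_top_eq hs ht hn hm h
  have key : ∀ p, p ≤ n → p ≤ m → s p = t p := by
    intro p
    induction p using Nat.strong_induction_on with
    | _ p IH =>
      intro hpn hpm
      have h1 : s p ∈ chainSet m t := by
        rw [← h]; exact Or.inl ⟨p, hpn, rfl⟩
      have h2 : t p ∈ chainSet n s := by
        rw [h]; exact Or.inl ⟨p, hpm, rfl⟩
      have hle1 : t p ≤ s p := by
        obtain ⟨q, hqm, hq⟩ := chainSet_below h1
          (htop ▸ chain_mono' hs.2.1 hpn le_rfl)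
        have hqp : p ≤ q := by
          by_contra hc
          push_neg at hc
          have := IH q hc (by omega) (by omega)
          have := chain_strictMono hs hc hpn
          omega
        have := chain_mono' ht.2.1 hqp hqm
        omega
      have hle2 : s p ≤ t p := by
        obtain ⟨q, hqn, hq⟩ := chainSet_below h2
          (htop ▸ chain_mono' ht.2.1 hpm le_rfl : t p ≤ s n)
        have hqp : p ≤ q := by
          by_contra hc
          push_neg at hc
          have := IH q hc (by omega) (by omega)
          have := chain_strictMono ht hc hpm
          omega
        have := chain_mono' hs.2.1 hqp hqn
        omega
      omega
  have hnm : n = m := by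
    by_contra hc
    rcases Nat.lt_or_ge n m with hlt | hge
    · have h1 := key n le_rfl (le_of_lt hlt)
      have := chain_strictMono ht hlt le_rfl
      omega
    · have hlt : m < n := by omega
      have h1 := key m (le_of_lt hlt) le_rfl
      have := chain_strictMono hs hlt le_rfl
      omega
  exact ⟨hnm, fun p hp => key p hp (by omega)⟩

lemma x_recover {n : ℕ} (x : Fin n → ℕ) (i : Fin n) :
    tosum n x (n - i.1) = x i + tosum n x (n - i.1 - 1) := by
  have hi := i.2
  have h := tosum_step (x := x) (n - i.1 - 1) (by omega)
  have e : (⟨n - (n - i.1 - 1) - 1, by omega⟩ : Fin n) = i := Fin.ext (by simp; omega)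
  rw [e] at h
  conv_lhs => rw [show n - i.1 = n - i.1 - 1 + 1 by omega]
  exact h

lemma arf_injOn {n m : ℕ} {x : Fin n → ℕ} {y : Fin m → ℕ}
    (hx : ArfSeq n x) (hy : ArfSeq m y) (h : arfSet n x = arfSet m y) :
    (⟨n, x⟩ : Σ k : ℕ, Fin k → ℕ) = ⟨m, y⟩ := by
  have hgx := chainGood_of_arfSeq hx.2.1 hx.2.2.1 hx.2.2.2
  have hgy := chainGood_of_arfSeq hy.2.1 hy.2.2.1 hy.2.2.2
  rw [arfSet_eq_chainSet, arfSet_eq_chainSet] at h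
  obtain ⟨hnm, hpt⟩ := chain_unique hgx hgy hx.1 hy.1 h
  subst hnm
  have hxy : x = y := by
    funext i
    have hi := i.2
    have h1 := x_recover x i
    have h2 := x_recover y i
    rw [hpt (n - i.1) (by omega), hpt (n - i.1 - 1) (by omega)] at h1
    omega
  rw [hxy]

lemma one_notmem_ns {S : Set ℕ} (h0 : 0 ∈ S)
    (hadd : ∀ a ∈ S, ∀ b ∈ S, a + b ∈ S) (hne : S ≠ Set.univ) : 1 ∉ S := by
  intro h1
  apply hne
  ext z
  simp only [Set.mem_univ, iff_true]
  induction z with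
  | zero => exact h0
  | succ z ih => exact hadd z ih 1 h1

lemma consec_lemma {S : Set ℕ} (harf : HasArfProperty S) {a : ℕ}
    (ha : a ∈ S) (ha1 : a + 1 ∈ S) : ∀ k, a + k ∈ S := by
  intro k
  induction k with
  | zero => exact ha
  | succ k ih =>
    rcases Nat.eq_zero_or_pos k with rfl | hk
    · exact ha1
    · have h := harf (a + k) ih (a + 1) ha1 a ha (by omega) (by omega)
      rw [show a + k + (a + 1) - a = a + (k + 1) by omega] at h
      exact h

lemma arf_surjOn {S : Set ℕ} (hS : IsNumericalSemigroup S) (harf : HasArfProperty S)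
    (hne : S ≠ Set.univ) : ∃ n : ℕ, ∃ x : Fin n → ℕ, ArfSeq n x ∧ arfSet n x = S := by
  obtain ⟨h0, hadd, hfin⟩ := hS
  have h1 : 1 ∉ S := one_notmem_ns h0 hadd hne
  have hCne : {c | ∀ t, c ≤ t → t ∈ S}.Nonempty := by
    obtain ⟨B, hB⟩ := hfin.bddAbove
    refine ⟨B + 1, fun t ht => ?_⟩
    by_contra hcon
    have := hB (show t ∈ Sᶜ from hcon)
    omega
  set c := sInf {c | ∀ t, c ≤ t → t ∈ S} with hcdef
  have hc : ∀ t, c ≤ t → t ∈ S := Nat.sInf_mem hCne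
  have hc2 : 2 ≤ c := by
    by_contra hcon
    push_neg at hcon
    exact h1 (hc 1 (by omega))
  have hcm : c - 1 ∉ S := by
    intro hmem
    have hsub : c - 1 ∈ {c | ∀ t, c ≤ t → t ∈ S} := by
      intro t ht
      rcases Nat.eq_or_lt_of_le ht with heq | hlt
      · exact heq ▸ hmem
      · exact hc t (by omega)
    have := Nat.sInf_le hsub
    omega
  have hcS : c ∈ S := hc c le_rfl
  have hFfin : (S ∩ Set.Iic c).Finite := (Set.finite_Iic c).inter_of_right S
  set F := hFfin.toFinset with hF
  have hmemF : ∀ z, z ∈ F ↔ z ∈ S ∧ z ≤ c := by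
    intro z
    rw [hF, Set.Finite.mem_toFinset]
    exact Iff.rfl
  have h0F : 0 ∈ F := (hmemF 0).mpr ⟨h0, by omega⟩
  have hcF : c ∈ F := (hmemF c).mpr ⟨hcS, le_rfl⟩
  set N := F.card with hN
  have hN2 : 2 ≤ N := Finset.one_lt_card.mpr ⟨0, h0F, c, hcF, by omega⟩
  set n := N - 1 with hn
  set f := F.orderEmbOfFin (rfl : F.card = N) with hf
  set σ : ℕ → ℕ := fun p => if h : p < N then f ⟨p, h⟩ else c + p with hσ
  have hfmem : ∀ i : Fin N, (f i) ∈ F := fun i => Finset.orderEmbOfFin_mem F rfl i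
  have hfsurj : ∀ z ∈ F, ∃ i : Fin N, f i = z := by
    intro z hz
    have hr := Finset.range_orderEmbOfFin F (rfl : F.card = N)
    have : z ∈ Set.range f := by rw [hf, hr]; exact hz
    exact this
  have hfsm : StrictMono f := f.strictMono
  have hσval : ∀ p (h : p < N), σ p = f ⟨p, h⟩ := by
    intro p h
    simp only [hσ, dif_pos h]
  have hσmem : ∀ p, p ≤ n → σ p ∈ S ∧ σ p ≤ c := by
    intro p hp
    rw [hσval p (by omega)]
    exact (hmemF _).mp (hfmem ⟨p, by omega⟩)
  have hσsm : ∀ p q, p < q → q ≤ n → σ p < σ q := by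
    intro p q hpq hq
    rw [hσval p (by omega), hσval q (by omega)]
    exact hfsm (show (⟨p, by omega⟩ : Fin N) < ⟨q, by omega⟩ from hpq)
  have hσ0 : σ 0 = 0 := by
    obtain ⟨i, hi⟩ := hfsurj 0 h0F
    have hle : f ⟨0, by omega⟩ ≤ f i := hfsm.monotone (by simp [Fin.le_def])
    rw [hσval 0 (by omega)]
    omega
  have hσn : σ n = c := by
    obtain ⟨i, hi⟩ := hfsurj c hcF
    have hle : f i ≤ f ⟨n, by omega⟩ := by
      apply hfsm.monotone
      have := i.2
      simp [Fin.le_def]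
      omega
    have hmem2 := (hmemF _).mp (hfmem ⟨n, by omega⟩)
    rw [hσval n (by omega)]
    omega
  have hσsurj : ∀ z, z ∈ S → z ≤ c → ∃ p, p ≤ n ∧ σ p = z := by
    intro z hz hzc
    obtain ⟨i, hi⟩ := hfsurj z ((hmemF z).mpr ⟨hz, hzc⟩)
    refine ⟨i.1, by have := i.2; omega, ?_⟩
    rw [hσval i.1 i.2]
    exact hi
  have hσsucc : ∀ p z, p < n → z ∈ S → σ p < z → σ (p + 1) ≤ z := by
    intro p z hp hz hlt
    rcases Nat.lt_or_ge z c with hzc | hzc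
    · obtain ⟨q, hq, rfl⟩ := hσsurj z hz (by omega)
      have hpq : p < q := by
        by_contra hcon
        push_neg at hcon
        rcases Nat.eq_or_lt_of_le hcon with rfl | h'
        · omega
        · have := hσsm q p h' (by omega)
          omega
      rcases Nat.eq_or_lt_of_le (show p + 1 ≤ q by omega) with rfl | h'
      · exact le_rfl
      · exact le_of_lt (hσsm (p + 1) q h' hq)
    · exact le_trans (hσmem (p + 1) (by omega)).2 hzc
  have hgap : ∀ p, p < n → σ p + 2 ≤ σ (p + 1) := by
    intro p hp
    have h1 := hσsm p (p + 1) (by omega) (by omega)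
    by_contra hcon
    push_neg at hcon
    have he : σ (p + 1) = σ p + 1 := by omega
    have hall := consec_lemma harf (hσmem p (by omega)).1
      (he ▸ (hσmem (p + 1) (by omega)).1)
    have hsub : σ p ∈ {c | ∀ t, c ≤ t → t ∈ S} := by
      intro t ht
      have := hall (t - σ p)
      rw [show σ p + (t - σ p) = t by omega] at this
      exact this
    have hcle : c ≤ σ p := Nat.sInf_le hsub
    have h2 := (hσmem (p + 1) (by omega)).2
    omega
  have hanti : ∀ p, p + 1 < n → σ (p + 2) + σ p ≤ 2 * σ (p + 1) := by
    intro p hp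
    have hm1 := hσmem p (by omega)
    have hm2 := hσmem (p + 1) (by omega)
    have hlt := hσsm p (p + 1) (by omega) (by omega)
    have hu := harf (σ (p + 1)) hm2.1 (σ (p + 1)) hm2.1 (σ p) hm1.1 (by omega) le_rfl
    have hsucc : σ (p + 2) ≤ σ (p + 1) + σ (p + 1) - σ p :=
      hσsucc (p + 1) _ (by omega) hu (by omega)
    omega
  set x : Fin n → ℕ := fun i => σ (n - i.1) - σ (n - i.1 - 1) with hx
  have hts : ∀ p, p ≤ n → tosum n x p = σ p := by
    intro p
    induction p with
    | zero => intro _; rw [tosum_zero, hσ0]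
    | succ p IH =>
      intro hp
      rw [tosum_step p (by omega), IH (by omega)]
      have hxv : x ⟨n - p - 1, by omega⟩ =
          σ (n - (n - p - 1)) - σ (n - (n - p - 1) - 1) := rfl
      rw [hxv, show n - (n - p - 1) = p + 1 by omega, show p + 1 - 1 = p by omega]
      have := hσsm p (p + 1) (by omega) hp
      omega
  have hxseq : ArfSeq n x := by
    refine ⟨by omega, ?_, ?_, ?_⟩
    · intro a b hab
      have ha := a.2
      have hb := b.2
      have habv : a.1 ≤ b.1 := hab
      have h := chain_gap_anti (n := n) (s := σ) hanti
        (show n - b.1 - 1 ≤ n - a.1 - 1 by omega) (show n - a.1 - 1 < n by omega)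
      rw [show n - a.1 - 1 + 1 = n - a.1 by omega,
        show n - b.1 - 1 + 1 = n - b.1 by omega] at h
      have hxa : x a = σ (n - a.1) - σ (n - a.1 - 1) := rfl
      have hxb : x b = σ (n - b.1) - σ (n - b.1 - 1) := rfl
      have m1 := hσsm (n - a.1 - 1) (n - a.1) (by omega) (by omega)
      have m2 := hσsm (n - b.1 - 1) (n - b.1) (by omega) (by omega)
      omega
    · intro i
      have hi := i.2
      have hg := hgap (n - i.1 - 1) (by omega)
      rw [show n - i.1 - 1 + 1 = n - i.1 by omega] at hg
      have hxv : x i = σ (n - i.1) - σ (n - i.1 - 1) := rfl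
      omega
    · intro i h
      have hi2 : i.1 + 1 < n := h
      set p := n - i.1 - 2 with hp
      have hxv : x ⟨i.1 + 1, h⟩ = σ (n - (i.1 + 1)) - σ (n - (i.1 + 1) - 1) := rfl
      rw [show n - (i.1 + 1) = p + 1 by omega, show p + 1 - 1 = p by omega] at hxv
      have hm1 := hσmem p (by omega)
      have hm2 := hσmem (p + 1) (by omega)
      have hlt := hσsm p (p + 1) (by omega) (by omega)
      have hu := harf (σ (p + 1)) hm2.1 (σ (p + 1)) hm2.1 (σ p) hm1.1 (by omega) le_rfl
      rcases Nat.lt_or_ge (σ (p + 1) + σ (p + 1) - σ p) c with hult | huge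
      · obtain ⟨q, hq, hqe⟩ := hσsurj _ hu (by omega)
        have hpq : p + 1 < q := by
          by_contra hcon
          push_neg at hcon
          rcases Nat.eq_or_lt_of_le hcon with rfl | h'
          · omega
          · have := hσsm q (p + 1) h' (by omega)
            omega
        left
        have hqn : n - q < n := by omega
        set j0 : Fin n := ⟨n - q, hqn⟩ with hj0
        have hj0v : (j0 : ℕ) = n - q := rfl
        have hj0i : j0 ≤ i := by
          rw [Fin.le_def, hj0v]
          omega
        refine ⟨j0, hj0i, ?_⟩
        have hIcc := sum_Icc_add (x := x) j0 i hj0i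
        rw [hj0v, show n - (n - q) = q by omega,
          show n - i.1 - 1 = p + 1 by omega] at hIcc
        rw [hts (p + 1) (by omega), hts q (by omega)] at hIcc
        rw [hxv]
        omega
      · right
        have hIic := sum_Iic_add (x := x) i
        rw [show n - i.1 - 1 = p + 1 by omega] at hIic
        rw [hts (p + 1) (by omega), hts n le_rfl, hσn] at hIic
        rw [hxv]
        omega
  have hset : arfSet n x = S := by
    rw [arfSet_eq_chainSet]
    ext z
    constructor
    · rintro (⟨p, hpn, rfl⟩ | hbig)
      · rw [hts p hpn]
        exact (hσmem p hpn).1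
      · rw [hts n le_rfl, hσn] at hbig
        exact hc z hbig
    · intro hz
      rcases Nat.lt_or_ge z c with hlt | hge
      · obtain ⟨p, hpn, hpe⟩ := hσsurj z hz (by omega)
        exact Or.inl ⟨p, hpn, by rw [hts p hpn, hpe]⟩
      · refine Or.inr ?_
        rw [hts n le_rfl, hσn]
        exact hge
  exact ⟨n, x, hxseq, hset⟩

theorem arfSeq_bijOn_arfSemigroups :
    Set.BijOn (fun p : Σ n : ℕ, Fin n → ℕ => arfSet p.1 p.2)
      {p : Σ n : ℕ, Fin n → ℕ | ArfSeq p.1 p.2}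
      {S : Set ℕ | IsNumericalSemigroup S ∧ HasArfProperty S ∧ S ≠ Set.univ} := by
  refine ⟨?_, ?_, ?_⟩
  · rintro ⟨n, x⟩ hp
    exact arf_mapsTo hp
  · rintro ⟨n, x⟩ hp ⟨m, y⟩ hq heq
    exact arf_injOn hp hq heq
  · intro S hS
    obtain ⟨n, x, hseq, hset⟩ := arf_surjOn hS.1 hS.2.1 hS.2.2
    exact ⟨⟨n, x⟩, hseq, hset⟩
end

section
/- Let k be a positive integer. (i) If (x_1, …, x_{k+1}) is an Arf sequence, then (x_1, …, x_k) is an Arf sequence. (ii) If (x_1, …, x_k) is an Arf sequence and x_{k+1} is any positive element of the set S(x_1, …, x_k), then (x_1, …, x_k, x_{k+1}) is an Arf sequence. -/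
private theorem iccMap (n : ℕ) (j i : Fin n) :
    Finset.Icc j.castSucc i.castSucc = (Finset.Icc j i).map Fin.castSuccEmb := by
  ext m
  simp only [Finset.mem_map, Finset.mem_Icc, Fin.coe_castSuccEmb]
  constructor
  · rintro ⟨h1, h2⟩
    have hm : m.1 < n := lt_of_le_of_lt (by exact_mod_cast h2) i.2
    refine ⟨⟨m.1, hm⟩, ⟨?_, ?_⟩, ?_⟩
    · simpa [Fin.le_def] using h1
    · simpa [Fin.le_def] using h2
    · simp [Fin.ext_iff]
  · rintro ⟨a, ⟨h1, h2⟩, rfl⟩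
    exact ⟨Fin.castSucc_le_castSucc_iff.2 h1, Fin.castSucc_le_castSucc_iff.2 h2⟩

private theorem iicMap (n : ℕ) (i : Fin n) :
    Finset.Iic i.castSucc = (Finset.Iic i).map Fin.castSuccEmb := by
  ext m
  simp only [Finset.mem_map, Finset.mem_Iic, Fin.coe_castSuccEmb]
  constructor
  · rintro h2
    have hm : m.1 < n := lt_of_le_of_lt (by exact_mod_cast h2) i.2
    refine ⟨⟨m.1, hm⟩, ?_, ?_⟩
    · simpa [Fin.le_def] using h2
    · simp [Fin.ext_iff]
  · rintro ⟨a, h2, rfl⟩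
    exact Fin.castSucc_le_castSucc_iff.2 h2

private theorem sumIcc (n : ℕ) (j i : Fin n) (x : Fin (n+1) → ℕ) :
    ∑ m ∈ Finset.Icc j.castSucc i.castSucc, x m = ∑ m ∈ Finset.Icc j i, x m.castSucc := by
  rw [iccMap, Finset.sum_map]; rfl

private theorem sumIic (n : ℕ) (i : Fin n) (x : Fin (n+1) → ℕ) :
    ∑ m ∈ Finset.Iic i.castSucc, x m = ∑ m ∈ Finset.Iic i, x m.castSucc := by
  rw [iicMap, Finset.sum_map]; rfl

theorem arfSeq_restrict_and_extend (k : ℕ) (hk : 0 < k) :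
    (∀ x : Fin (k + 1) → ℕ, ArfSeq (k + 1) x → ArfSeq k (x ∘ Fin.castSucc)) ∧
    (∀ x : Fin k → ℕ, ∀ y : ℕ, ArfSeq k x → y ∈ arfSet k x → 0 < y →
      ArfSeq (k + 1) (Fin.snoc x y)) := by
  constructor
  · rintro x ⟨-, hmono, h2, hrec⟩
    refine ⟨hk, fun a b h => hmono (Fin.castSucc_le_castSucc_iff.2 h), fun i => h2 _, ?_⟩
    intro i hi
    have hi' : (Fin.castSucc i).1 + 1 < k + 1 := Nat.lt_succ_of_lt hi
    have hx1 : x ⟨i.1 + 1, hi'⟩ = (x ∘ Fin.castSucc) ⟨i.1 + 1, hi⟩ := rfl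
    rcases hrec i.castSucc hi' with ⟨j, hj, hsum⟩ | hge
    · left
      have hjk : j.1 < k := lt_of_le_of_lt hj i.2
      refine ⟨⟨j.1, hjk⟩, by simpa [Fin.le_def] using hj, ?_⟩
      have : j = Fin.castSucc ⟨j.1, hjk⟩ := by simp [Fin.ext_iff]
      have hsum' : x ⟨i.1 + 1, hi'⟩ = ∑ m ∈ Finset.Icc j i.castSucc, x m := hsum
      rw [← hx1, hsum']
      exact sumIcc k ⟨j.1, hjk⟩ i x
    · right
      rw [← hx1]
      calc ∑ m ∈ Finset.Iic i, (x ∘ Fin.castSucc) m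
          = ∑ m ∈ Finset.Iic i.castSucc, x m := (sumIic k i x).symm
        _ ≤ x ⟨i.1+1, hi'⟩ := hge
  · rintro x y ⟨-, hmono, h2, hrec⟩ hy hypos
    have hk1 : k - 1 < k := by omega
    set top : Fin k := ⟨k - 1, hk1⟩ with htop
    have hletop : ∀ a : Fin k, a ≤ top := fun a => by
      simp [Fin.le_def, htop]; omega
    have hsnocC : ∀ (s : Finset (Fin k)),
        ∑ m ∈ s, (Fin.snoc x y : Fin (k+1) → ℕ) m.castSucc = ∑ m ∈ s, x m :=
      fun s => Finset.sum_congr rfl fun m _ => by simp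
    have htopy : x top ≤ y := by
      rcases hy with h0 | ⟨k', rfl⟩ | htot
      · omega
      · exact Finset.single_le_sum (fun i _ => Nat.zero_le _)
          (Finset.mem_Ici.2 (hletop _))
      · exact le_trans (Finset.single_le_sum (fun i _ => Nat.zero_le _)
          (Finset.mem_univ top)) htot
    have hxley : ∀ a : Fin k, x a ≤ y := fun a => le_trans (hmono (hletop a)) htopy
    refine ⟨by omega, ?_, ?_, ?_⟩
    · -- monotone
      intro a b hab
      induction b using Fin.lastCases with
      | last =>
        induction a using Fin.lastCases with
        | last => exact le_refl _
        | cast a => rw [Fin.snoc_castSucc, Fin.snoc_last]; exact hxley a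
      | cast b =>
        induction a using Fin.lastCases with
        | last => exact absurd hab (by simp [Fin.le_def])
        | cast a =>
          rw [Fin.snoc_castSucc, Fin.snoc_castSucc]
          exact hmono (Fin.castSucc_le_castSucc_iff.1 hab)
    · -- 2 ≤
      intro i
      induction i using Fin.lastCases with
      | last => rw [Fin.snoc_last]; exact le_trans (h2 top) htopy
      | cast i => rw [Fin.snoc_castSucc]; exact h2 i
    · intro i hi
      have hik : i.1 < k := by omega
      set i' : Fin k := ⟨i.1, hik⟩ with hi'def
      have hieq : i = Fin.castSucc i' := by simp [Fin.ext_iff, hi'def]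
      by_cases hlast : i.1 + 1 = k
      · -- successor index is the last one
        have hlasteq : (⟨i.1 + 1, hi⟩ : Fin (k+1)) = Fin.last k := by
          simp [Fin.ext_iff, hlast]
        have hi'top : i' = top := by simp [Fin.ext_iff, hi'def, htop]; omega
        rcases hy with h0 | ⟨k', hsum⟩ | htot
        · omega
        · left
          have hk'le : k' ≤ i' := by rw [hi'top]; exact hletop k'
          refine ⟨Fin.castSucc k', Fin.castSucc_le_castSucc_iff.2 hk'le, ?_⟩
          rw [hlasteq, Fin.snoc_last]
          show y = ∑ m ∈ Finset.Icc (Fin.castSucc k') (Fin.castSucc i'),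
            (Fin.snoc x y : Fin (k+1) → ℕ) m
          rw [sumIcc, hsnocC, hsum]
          congr 1
          ext m
          simp only [Finset.mem_Ici, Finset.mem_Icc]
          exact ⟨fun h => ⟨h, hi'top ▸ hletop m⟩, fun h => h.1⟩
        · right
          rw [hlasteq, Fin.snoc_last]
          show ∑ m ∈ Finset.Iic (Fin.castSucc i'), (Fin.snoc x y : Fin (k+1) → ℕ) m ≤ y
          rw [sumIic, hsnocC]
          refine le_trans (le_of_eq ?_) htot
          apply Finset.sum_congr _ (fun _ _ => rfl)
          ext m
          simp only [Finset.mem_Iic, Finset.mem_univ, iff_true]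
          exact hi'top ▸ hletop m
      · -- interior index: use the recurrence for x
        have hik1 : i.1 + 1 < k := by omega
        have hcast : (⟨i.1 + 1, hi⟩ : Fin (k+1)) = Fin.castSucc ⟨i.1 + 1, hik1⟩ := rfl
        rcases hrec i' hik1 with ⟨j, hj, hsum⟩ | hge
        · left
          refine ⟨Fin.castSucc j, Fin.castSucc_le_castSucc_iff.2 hj, ?_⟩
          rw [hcast, Fin.snoc_castSucc]
          show x ⟨i.1 + 1, hik1⟩ = ∑ m ∈ Finset.Icc (Fin.castSucc j) (Fin.castSucc i'),
            (Fin.snoc x y : Fin (k+1) → ℕ) m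
          rw [sumIcc, hsnocC]
          exact hsum
        · right
          rw [hcast, Fin.snoc_castSucc]
          show ∑ m ∈ Finset.Iic (Fin.castSucc i'), (Fin.snoc x y : Fin (k+1) → ℕ) m ≤
            x ⟨i.1 + 1, hik1⟩
          rw [sumIic, hsnocC]
          exact hge
end

section
/- Let (x_1, …, x_n) be an Arf sequence and let S = S(x_1, …, x_n). Then n = c(S) − g(S), where c(S) is the conductor and g(S) is the genus of S. -/
theorem arfSeq_length_eq_conductor_sub_genus (n : ℕ) (x : Fin n → ℕ) (hx : ArfSeq n x) :
    n = conductorOf (arfSet n x) - genusOf (arfSet n x) := by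
  obtain ⟨hn, -, hx2, -⟩ := hx
  classical
  set S := arfSet n x with hS
  set N := ∑ i, x i with hN
  set T : Fin n → ℕ := fun k => ∑ i ∈ Finset.Ici k, x i with hT
  have z0 : Fin n := ⟨0, hn⟩
  have hT0 : T ⟨0, hn⟩ = N := by
    simp only [hT, hN]
    congr 1
    ext i
    simp [Fin.le_def]
  have hTge : ∀ k, 2 ≤ T k := fun k =>
    le_trans (hx2 k) (Finset.single_le_sum (fun i _ => Nat.zero_le _) (Finset.mem_Ici.mpr le_rfl))
  have hN2 : 2 ≤ N := hT0 ▸ hTge ⟨0, hn⟩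
  have hsplit : ∀ k : Fin n, N = (∑ i ∈ Finset.Iio k, x i) + T k := by
    intro k
    rw [hN, ← Finset.sum_filter_add_sum_filter_not Finset.univ (· < k)]
    congr 1
    · congr 1; ext i; simp
    · congr 1; ext i; simp
  have hTle : ∀ k : Fin n, 1 ≤ k.1 → T k + 2 ≤ N := by
    intro k hk
    have h := hsplit k
    have : x ⟨0, hn⟩ ≤ ∑ i ∈ Finset.Iio k, x i :=
      Finset.single_le_sum (fun i _ => Nat.zero_le _)
        (Finset.mem_Iio.mpr (by simp [Fin.lt_def]; omega))
    have := hx2 ⟨0, hn⟩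
    omega
  have hN1 : N - 1 ∉ S := by
    rintro (h | ⟨k, hk⟩ | h)
    · omega
    · rcases Nat.eq_zero_or_pos k.1 with h0 | h0
      · have hk' : N - 1 = T k := hk
        rw [show k = ⟨0, hn⟩ from Fin.ext h0, hT0] at hk'
        omega
      · have hk' : N - 1 = T k := hk
        have := hTle k h0
        omega
    · omega
  have hcond : conductorOf S = N := by
    have hNmem : N ∈ {c | ∀ m, c ≤ m → m ∈ S} := fun m hm => Or.inr (Or.inr hm)
    apply le_antisymm (Nat.sInf_le hNmem)
    by_contra h
    push_neg at h
    have hmem := Nat.sInf_mem (⟨N, hNmem⟩ : Set.Nonempty {c | ∀ m, c ≤ m → m ∈ S})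
    exact hN1 (hmem (N - 1) (by omega))
  have hanti : StrictAnti T := by
    intro k l hkl
    have hU : Finset.Ico k l ∪ Finset.Ici l = Finset.Ici k := by
      ext i; simp [Finset.mem_Ico, Finset.mem_Ici]
      constructor
      · rintro (⟨h1, _⟩ | h1)
        · exact h1
        · exact le_trans hkl.le h1
      · intro h1
        rcases lt_or_ge i l with h2 | h2
        · exact Or.inl ⟨h1, h2⟩
        · exact Or.inr h2
    have hD : Disjoint (Finset.Ico k l) (Finset.Ici l) := by
      rw [Finset.disjoint_left]
      intro a ha hb
      simp only [Finset.mem_Ico] at ha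
      simp only [Finset.mem_Ici] at hb
      exact absurd (lt_of_le_of_lt hb ha.2) (lt_irrefl _)
    have : T k = (∑ i ∈ Finset.Ico k l, x i) + T l := by
      show (∑ i ∈ Finset.Ici k, x i) = (∑ i ∈ Finset.Ico k l, x i) + ∑ i ∈ Finset.Ici l, x i
      rw [← hU, Finset.sum_union hD]
    have hpos : 0 < ∑ i ∈ Finset.Ico k l, x i :=
      lt_of_lt_of_le (Nat.lt_of_lt_of_le Nat.zero_lt_two (hx2 k))
        (Finset.single_le_sum (fun i _ => Nat.zero_le _) (Finset.mem_Ico.mpr ⟨le_rfl, hkl⟩))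
    exact lt_of_lt_of_le (Nat.lt_add_of_pos_left hpos) this.ge
  have hcomplS : (Sᶜ : Set ℕ) = ↑((Finset.range N).filter (fun z => z ∉ S)) := by
    ext z
    simp only [Set.mem_compl_iff, Finset.coe_filter, Finset.mem_range, Set.mem_setOf_eq]
    constructor
    · intro hz
      refine ⟨?_, hz⟩
      by_contra h
      push_neg at h
      exact hz (Or.inr (Or.inr h))
    · exact fun h => h.2
  have hgen : genusOf S = ((Finset.range N).filter (fun z => z ∉ S)).card := by
    rw [genusOf, hcomplS, Set.ncard_coe_finset]
  have hinfilter : (Finset.range N).filter (fun z => z ∈ S) =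
      insert 0 ((Finset.univ.filter (fun k : Fin n => 1 ≤ k.1)).image T) := by
    ext z
    simp only [Finset.mem_filter, Finset.mem_range, Finset.mem_insert, Finset.mem_image,
      Finset.mem_univ, true_and]
    constructor
    · rintro ⟨hzN, h | ⟨k, hk⟩ | h⟩
      · exact Or.inl h
      · have hk' : z = T k := hk
        rcases Nat.eq_zero_or_pos k.1 with h0 | h0
        · rw [show k = ⟨0, hn⟩ from Fin.ext h0, hT0] at hk'
          omega
        · exact Or.inr ⟨k, h0, hk'.symm⟩
      · omega
    · rintro (rfl | ⟨k, hk1, rfl⟩)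
      · exact ⟨by omega, Or.inl rfl⟩
      · exact ⟨by have := hTle k hk1; omega, Or.inr (Or.inl ⟨k, rfl⟩)⟩
  have hcard_in : ((Finset.range N).filter (fun z => z ∈ S)).card = n := by
    rw [hinfilter, Finset.card_insert_of_notMem]
    · rw [Finset.card_image_of_injective _ hanti.injective]
      have : Finset.univ.filter (fun k : Fin n => 1 ≤ k.1) = Finset.univ.erase ⟨0, hn⟩ := by
        ext k
        simp [Fin.ext_iff]
        omega
      rw [this, Finset.card_erase_of_mem (Finset.mem_univ _), Finset.card_univ, Fintype.card_fin]
      omega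
    · simp only [Finset.mem_image, Finset.mem_filter, not_exists]
      rintro k ⟨_, hk⟩
      have := hTge k
      omega
  have htot : ((Finset.range N).filter (fun z => z ∈ S)).card +
      ((Finset.range N).filter (fun z => z ∉ S)).card = N := by
    rw [Finset.card_filter_add_card_filter_not, Finset.card_range]
  have hnN : n ≤ N := by omega
  rw [hcond, hgen]
  omega
end

section
/- Let S be a numerical semigroup with multiplicity m. Then S has the Arf property if and only if for every i, j ∈ {0, …, m−1} the following holds: (i) if ⌈(w(i) − w(j))/m⌉ ≥ 0, then h(j, j) − h((2j − i) mod m, i) + 2⌈(w(i) − w(j))/m⌉ ≥ 0; (ii) if ⌈(w(i) − w(j))/m⌉ < 0, then h(j, j) − h((2j − i) mod m, i) + ⌈(w(i) − w(j))/m⌉ ≥ 0. Here ⌈·⌉ denotes the ceiling of a rational number. -/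
lemma ns_arf_aux (S : Set ℕ) (hP : ∀ x ∈ S, ∀ y ∈ S, y ≤ x → x + x - y ∈ S) :
    ∀ n : ℕ, ∀ x ∈ S, ∀ y ∈ S, ∀ z ∈ S, z ≤ y → y ≤ x → x + y - 2*z ≤ n → x + y - z ∈ S := by
  intro n
  induction n with
  | zero =>
    intro x hx y hy z hz h1 h2 h3
    have : x + y - z = y := by omega
    rwa [this]
  | succ n ih =>
    intro x hx y hy z hz h1 h2 h3
    rcases eq_or_lt_of_le h1 with h | h
    · have : x + y - z = x := by omega
      rwa [this]
    · have hu : y + y - z ∈ S := hP y hy z hz h1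
      rcases le_total x (y + y - z) with hxu | hux
      · have := ih (y + y - z) hu x hx y hy h2 hxu (by omega)
        have he : y + y - z + x - y = x + y - z := by omega
        rwa [he] at this
      · have := ih x hx (y + y - z) hu y hy (by omega) hux (by omega)
        have he : x + (y + y - z) - y = x + y - z := by omega
        rwa [he] at this

lemma arf_iff_P (S : Set ℕ) :
    HasArfProperty S ↔ ∀ x ∈ S, ∀ y ∈ S, y ≤ x → x + x - y ∈ S := by
  constructor
  · intro hA x hx y hy hxy
    exact hA x hx x hx y hy hxy le_rfl
  · intro hP x hx y hy z hz h1 h2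
    exact ns_arf_aux S hP (x + y - 2*z) x hx y hy z hz h1 h2 le_rfl

set_option maxHeartbeats 1000000 in
theorem arf_iff_cocycle_condition (S : Set ℕ) (hS : IsNumericalSemigroup S)
    (m : ℕ) (hm : m = multiplicityOf S) :
    HasArfProperty S ↔
      ∀ i < m, ∀ j < m,
        ((0:ℤ) ≤ ⌈((aperyW S m i : ℚ) - (aperyW S m j : ℚ)) / (m : ℚ)⌉ →
          0 ≤ cocycle S m j j
              - cocycle S m ((2 * (j : ℤ) - (i : ℤ)) % (m : ℤ)).toNat i
              + 2 * (⌈((aperyW S m i : ℚ) - (aperyW S m j : ℚ)) / (m : ℚ)⌉ : ℚ)) ∧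
        (⌈((aperyW S m i : ℚ) - (aperyW S m j : ℚ)) / (m : ℚ)⌉ < (0:ℤ) →
          0 ≤ cocycle S m j j
              - cocycle S m ((2 * (j : ℤ) - (i : ℤ)) % (m : ℤ)).toNat i
              + (⌈((aperyW S m i : ℚ) - (aperyW S m j : ℚ)) / (m : ℚ)⌉ : ℚ)) := by
  obtain ⟨h0S, haddS, hfin⟩ := hS
  obtain ⟨B, hB⟩ := hfin.bddAbove
  have hBn : ∀ n, B + 1 ≤ n → n ∈ S := by
    intro n hn; by_contra h; exact absurd (hB h) (by omega)
  have hmm : m ∈ S ∧ 0 < m := by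
    rw [hm, multiplicityOf]
    have : (B + 1) ∈ {n | n ∈ S ∧ 0 < n} := ⟨hBn _ le_rfl, by omega⟩
    exact Nat.sInf_mem ⟨B + 1, this⟩
  obtain ⟨hmS, hmpos⟩ := hmm
  have hm0 : (0 : ℚ) < (m : ℚ) := by exact_mod_cast hmpos
  have hmz : (m : ℚ) ≠ 0 := ne_of_gt hm0
  have hmZ : (0 : ℤ) < (m : ℤ) := by exact_mod_cast hmpos
  have hWmem : ∀ i < m, aperyW S m i ∈ S ∧ aperyW S m i % m = i := by
    intro i hi
    have hw : (i + (B + 1) * m) ∈ {s | s ∈ S ∧ s % m = i} := by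
      constructor
      · apply hBn
        have : B + 1 ≤ (B + 1) * m := Nat.le_mul_of_pos_right _ hmpos
        omega
      · rw [Nat.add_mul_mod_self_right, Nat.mod_eq_of_lt hi]
    exact Nat.sInf_mem ⟨_, hw⟩
  have hWle : ∀ i, ∀ s ∈ S, s % m = i → aperyW S m i ≤ s := fun i s hs hsi =>
    Nat.sInf_le ⟨hs, hsi⟩
  have haddmul : ∀ s ∈ S, ∀ c : ℕ, s + m * c ∈ S := by
    intro s hs c
    induction c with
    | zero => simpa using hs
    | succ c ih =>
      have := haddS _ ih m hmS
      have he : s + m * c + m = s + m * (c + 1) := by ring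
      rwa [he] at this
  have hmemclass : ∀ i < m, ∀ s, aperyW S m i ≤ s → s % m = i → s ∈ S := by
    intro i hi s hle hsi
    obtain ⟨hWS, hWmod⟩ := hWmem i hi
    have hmod : Nat.ModEq m (aperyW S m i) s := by
      unfold Nat.ModEq; rw [hWmod, hsi]
    obtain ⟨c, hc⟩ := (Nat.modEq_iff_dvd' hle).mp hmod
    have : s = aperyW S m i + m * c := by omega
    rw [this]; exact haddmul _ hWS c
  -- k facts
  have hkcast : ∀ i j : ℕ, ((((2 * (j:ℤ) - i) % m).toNat : ℤ) = (2 * (j:ℤ) - i) % m) :=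
    fun i j => Int.toNat_of_nonneg (Int.emod_nonneg _ (ne_of_gt hmZ))
  have hklt : ∀ i j : ℕ, ((2 * (j:ℤ) - i) % m).toNat < m := by
    intro i j
    have h2 := Int.emod_lt_of_pos (2 * (j:ℤ) - i) hmZ
    have h3 := hkcast i j
    omega
  have hidx : ∀ i j : ℕ, ((((2 * (j:ℤ) - i) % m).toNat + i) % m = (j + j) % m) := by
    intro i j
    have h1 : ((((2 * (j:ℤ) - i) % m).toNat : ℤ) + i) % m = ((j:ℤ) + j) % m := by
      rw [hkcast, Int.emod_add_emod]
      ring_nf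
    have h2 : (((((2 * (j:ℤ) - i) % m).toNat + i) % m : ℕ) : ℤ) = (((j + j) % m : ℕ) : ℤ) := by
      rw [Int.natCast_mod, Int.natCast_mod]
      push_cast
      exact h1
    exact_mod_cast h2
  -- class of x + x - y
  have hclassk : ∀ i, i < m → ∀ j, j < m → ∀ x, x % m = j → ∀ y, y % m = i → y ≤ x + x →
      (x + x - y) % m = ((2 * (j:ℤ) - i) % m).toNat := by
    intro i hi j hj x hx y hy hyx
    have hx' : (x:ℤ) % m = (j:ℤ) % m := by
      have h := congrArg (Nat.cast : ℕ → ℤ) hx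
      rw [Int.natCast_mod] at h
      rw [h, Int.emod_eq_of_lt (by positivity) (by exact_mod_cast hj)]
    have hy' : (y:ℤ) % m = (i:ℤ) % m := by
      have h := congrArg (Nat.cast : ℕ → ℤ) hy
      rw [Int.natCast_mod] at h
      rw [h, Int.emod_eq_of_lt (by positivity) (by exact_mod_cast hi)]
    have h1 : ((x:ℤ) + x - y) % m = ((j:ℤ) + j - i) % m := (Int.ModEq.add hx' hx').sub hy'
    have h2 : ((j:ℤ) + j - i) % m = (((2 * (j:ℤ) - i) % m).toNat : ℤ) := by
      rw [hkcast]; ring_nf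
    have h3 : (((x + x - y) % m : ℕ) : ℤ) = ((((2 * (j:ℤ) - i) % m).toNat : ℕ) : ℤ) := by
      rw [Int.natCast_mod, Nat.cast_sub hyx]
      push_cast
      rw [h1, h2]
    exact_mod_cast h3
  -- ceiling facts
  have hceil1 : ∀ i j : ℕ, (aperyW S m i : ℤ) - aperyW S m j ≤
      ⌈((aperyW S m i : ℚ) - (aperyW S m j : ℚ)) / (m : ℚ)⌉ * m := by
    intro i j
    have h := Int.le_ceil (((aperyW S m i : ℚ) - (aperyW S m j : ℚ)) / (m : ℚ))
    rw [div_le_iff₀ hm0] at h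
    exact_mod_cast h
  have hceil2 : ∀ i j : ℕ, ∀ c : ℤ, (aperyW S m i : ℤ) - aperyW S m j ≤ c * m →
      ⌈((aperyW S m i : ℚ) - (aperyW S m j : ℚ)) / (m : ℚ)⌉ ≤ c := by
    intro i j c hc
    apply Int.ceil_le.mpr
    rw [div_le_iff₀ hm0]
    exact_mod_cast hc
  -- bridge
  have hbridge : ∀ i j : ℕ, ∀ c : ℤ,
      (0 ≤ cocycle S m j j - cocycle S m ((2 * (j:ℤ) - i) % m).toNat i + (c : ℚ)) ↔
      ((aperyW S m ((2 * (j:ℤ) - i) % m).toNat : ℤ) + aperyW S m i ≤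
        (aperyW S m j : ℤ) + aperyW S m j + c * m) := by
    intro i j c
    rw [cocycle, cocycle, hidx i j, div_sub_div_same, div_add' _ _ _ hmz, le_div_iff₀ hm0,
      zero_mul]
    have hA : (aperyW S m j : ℚ) + (aperyW S m j : ℚ) - (aperyW S m ((j + j) % m) : ℚ) -
        ((aperyW S m ((2 * (j:ℤ) - i) % m).toNat : ℚ) + (aperyW S m i : ℚ) -
          (aperyW S m ((j + j) % m) : ℚ)) + (c : ℚ) * (m : ℚ) =
        ((((aperyW S m j : ℤ) + aperyW S m j + c * m -
          ((aperyW S m ((2 * (j:ℤ) - i) % m).toNat : ℤ) + aperyW S m i)) : ℤ) : ℚ) := by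
      push_cast; ring
    rw [hA, Int.cast_nonneg_iff, sub_nonneg]
  -- main equivalence
  rw [arf_iff_P]
  constructor
  · -- P → RHS
    intro hP i hi j hj
    constructor
    · intro htp
      set t := ⌈((aperyW S m i : ℚ) - (aperyW S m j : ℚ)) / (m : ℚ)⌉ with ht
      set a := t.toNat with hta
      have hta' : (a : ℤ) = t := Int.toNat_of_nonneg htp
      have hxj : (aperyW S m j + a * m) % m = j := by
        rw [Nat.add_mul_mod_self_right]; exact (hWmem j hj).2
      have hxS : aperyW S m j + a * m ∈ S :=
        hmemclass j hj _ (Nat.le_add_right _ _) hxj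
      have hyx : aperyW S m i ≤ aperyW S m j + a * m := by
        have h1 : (aperyW S m i : ℤ) ≤ (aperyW S m j : ℤ) + a * m := by
          rw [hta']; have := hceil1 i j; linarith
        exact_mod_cast h1
      have hmem := hP _ hxS _ (hWmem i hi).1 hyx
      have hcl := hclassk i hi j hj _ hxj _ (hWmem i hi).2 (by omega)
      have hWk := hWle _ _ hmem hcl
      have h2t : (2 : ℚ) * (t : ℚ) = (((2 * t : ℤ)) : ℚ) := by push_cast; ring
      rw [h2t, hbridge i j (2 * t)]
      have hq : ((a * m : ℕ) : ℤ) = t * m := by push_cast; rw [hta']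
      have hgoal : (aperyW S m ((2 * (j:ℤ) - i) % m).toNat : ℤ) + aperyW S m i ≤
          (aperyW S m j : ℤ) + aperyW S m j + 2 * ((a * m : ℕ) : ℤ) := by omega
      rw [hq] at hgoal
      linarith
    · intro htn
      set t := ⌈((aperyW S m i : ℚ) - (aperyW S m j : ℚ)) / (m : ℚ)⌉ with ht
      set a := (-t).toNat with hta
      have hta' : (a : ℤ) = -t := Int.toNat_of_nonneg (by omega)
      have hyi : (aperyW S m i + a * m) % m = i := by
        rw [Nat.add_mul_mod_self_right]; exact (hWmem i hi).2
      have hyS : aperyW S m i + a * m ∈ S :=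
        hmemclass i hi _ (Nat.le_add_right _ _) hyi
      have hyx : aperyW S m i + a * m ≤ aperyW S m j := by
        have h1 : (aperyW S m i : ℤ) + a * m ≤ (aperyW S m j : ℤ) := by
          rw [hta']; have := hceil1 i j; linarith
        exact_mod_cast h1
      have hmem := hP _ (hWmem j hj).1 _ hyS hyx
      have hcl := hclassk i hi j hj _ (hWmem j hj).2 _ hyi (by omega)
      have hWk := hWle _ _ hmem hcl
      rw [hbridge i j t]
      have hq : ((a * m : ℕ) : ℤ) = -(t * m) := by push_cast; rw [hta']; ring
      have hgoal : (aperyW S m ((2 * (j:ℤ) - i) % m).toNat : ℤ) + aperyW S m i ≤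
          (aperyW S m j : ℤ) + aperyW S m j - ((a * m : ℕ) : ℤ) := by omega
      rw [hq] at hgoal
      linarith
  · -- RHS → P
    intro hR x hx y hy hyx
    have hj : x % m < m := Nat.mod_lt _ hmpos
    have hi : y % m < m := Nat.mod_lt _ hmpos
    obtain ⟨hpair1, hpair2⟩ := hR (y % m) hi (x % m) hj
    set i := y % m
    set j := x % m
    set t := ⌈((aperyW S m i : ℚ) - (aperyW S m j : ℚ)) / (m : ℚ)⌉ with ht
    have hWjx : aperyW S m j ≤ x := hWle j x hx rfl
    have hWiy : aperyW S m i ≤ y := hWle i y hy rfl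
    obtain ⟨a, ha⟩ := (Nat.modEq_iff_dvd' hWjx).mp
      (by unfold Nat.ModEq; rw [(hWmem j hj).2])
    obtain ⟨b, hb⟩ := (Nat.modEq_iff_dvd' hWiy).mp
      (by unfold Nat.ModEq; rw [(hWmem i hi).2])
    have hxa : x = aperyW S m j + m * a := by omega
    have hyb : y = aperyW S m i + m * b := by omega
    have hxa' : (x : ℤ) = (aperyW S m j : ℤ) + m * a := by exact_mod_cast congrArg (Nat.cast : ℕ → ℤ) hxa
    have hyb' : (y : ℤ) = (aperyW S m i : ℤ) + m * b := by exact_mod_cast congrArg (Nat.cast : ℕ → ℤ) hyb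
    have hyx' : (y : ℤ) ≤ (x : ℤ) := by exact_mod_cast hyx
    have hab : t ≤ (a : ℤ) - b := by
      apply hceil2
      have : (aperyW S m i : ℤ) + m * b ≤ (aperyW S m j : ℤ) + m * a := by
        rw [← hxa', ← hyb']; exact hyx'
      linarith
    have hta : t ≤ (a : ℤ) := by
      apply hceil2
      have h1 : (aperyW S m i : ℤ) ≤ (y : ℤ) := by exact_mod_cast hWiy
      have : (aperyW S m i : ℤ) ≤ (aperyW S m j : ℤ) + m * a := by
        rw [← hxa']; linarith
      linarith
    have hmZ' : (0 : ℤ) ≤ (m : ℤ) := le_of_lt hmZ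
    have h5 : t * m ≤ (a : ℤ) * m := mul_le_mul_of_nonneg_right hta hmZ'
    have h6 : t * m ≤ ((a : ℤ) - b) * m := mul_le_mul_of_nonneg_right hab hmZ'
    apply hmemclass _ (hklt i j) _ _ (hclassk i hi j hj x rfl y rfl (by omega))
    -- ⊢ aperyW S m k ≤ x + x - y
    have hkx : (aperyW S m ((2 * (j:ℤ) - i) % m).toNat : ℤ) ≤ (x : ℤ) + x - y := by
      rcases le_or_gt 0 t with htp | htn
      · have hcond := hpair1 htp
        have h2t : (2 : ℚ) * (t : ℚ) = (((2 * t : ℤ)) : ℚ) := by push_cast; ring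
        rw [ht, h2t, hbridge i j (2 * t)] at hcond
        linarith [hcond, h5, h6, hxa', hyb']
      · have hcond := hpair2 htn
        rw [ht, hbridge i j t] at hcond
        have hb0 : (0 : ℤ) ≤ (b : ℤ) * m := mul_nonneg (by positivity) hmZ'
        have ha0 : (0 : ℤ) ≤ (a : ℤ) * m := mul_nonneg (by positivity) hmZ'
        linarith [hcond, h6, hxa', hyb', hb0, ha0]
    omega
end

section
/- Let S be a numerical semigroup with multiplicity m and Kunz coordinates (x_1, …, x_{m−1}) (with the convention x_0 = 0). Then S has the Arf property if and only if for all i, j ∈ {0, …, m−1} the following holds: (i) if x_i + ⌈(i − j)/m⌉ ≥ x_j, then x_i − x_{(2j−i) mod m} + 2⌈(i − j)/m⌉ + ⌊2j/m⌋ − ⌊(((2j − i) mod m) + i)/m⌋ ≥ 0; (ii) if x_i + ⌈(i − j)/m⌉ < x_j, then x_j − x_{(2j−i) mod m} + ⌈(i − j)/m⌉ + ⌊2j/m⌋ − ⌊(((2j − i) mod m) + i)/m⌋ ≥ 0. Here ⌈·⌉ and ⌊·⌋ denote the ceiling and floor of rational numbers. -/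
private lemma myediv (a b q r : ℤ) (hb : 0 < b) (h1 : 0 ≤ r) (h2 : r < b) (h3 : a = b*q + r) :
    a / b = q ∧ a % b = r := by
  constructor
  · rw [show a = r + q * b by linarith [mul_comm b q], Int.add_mul_ediv_right _ _ hb.ne',
      Int.ediv_eq_zero_of_lt h1 h2, zero_add]
  · rw [show a = r + q * b by linarith [mul_comm b q], Int.add_mul_emod_self_right,
      Int.emod_eq_of_lt h1 h2]

private lemma arf_of_two (S : Set ℕ)
    (H2 : ∀ s ∈ S, ∀ t ∈ S, t ≤ s → 2 * s - t ∈ S) : HasArfProperty S := by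
  have key : ∀ μ : ℕ, ∀ s ∈ S, ∀ t ∈ S, ∀ z ∈ S, z ≤ t → t ≤ s → s + t - 2*z ≤ μ →
      s + t - z ∈ S := by
    intro μ
    induction μ with
    | zero =>
      intro s hs t ht z hz h1 h2 h3
      have e : s + t - z = s := by omega
      rw [e]; exact hs
    | succ μ ih =>
      intro s hs t ht z hz h1 h2 h3
      rcases eq_or_lt_of_le h1 with h|h
      · have e : s + t - z = s := by omega
        rw [e]; exact hs
      · have h2t : 2*t - z ∈ S := H2 t ht z hz h1
        rcases le_or_gt (2*t - z) s with hc|hc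
        · have := ih s hs (2*t-z) h2t t ht (by omega) hc (by omega)
          have e : s + (2*t-z) - t = s + t - z := by omega
          rwa [e] at this
        · have := ih (2*t-z) h2t s hs t ht h2 (by omega) (by omega)
          have e : (2*t-z) + s - t = s + t - z := by omega
          rwa [e] at this
  intro a ha b hb c hc h1 h2
  exact key (a + b - 2*c) a ha b hb c hc h1 h2 le_rfl

private lemma pair_iff (m : ℕ) (hm0 : 0 < m) (x : ℕ → ℕ) (i j : ℕ) (hi : i < m) (hj : j < m)
    (wi wj wr : ℤ) (hwi : wi = x i * m + i) (hwj : wj = x j * m + j)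
    (hwr : wr = x ((2 * (j : ℤ) - (i : ℤ)) % (m : ℤ)).toNat * m
        + (((2 * (j : ℤ) - (i : ℤ)) % (m : ℤ)).toNat : ℤ)) :
    (wr ≤ 2 * wj - wi - m * min ((wj - wi)/m) (2*((wj - wi)/m))) ↔
      ((((x j : ℚ) ≤ (x i : ℚ) + (⌈((i : ℚ) - (j : ℚ)) / (m : ℚ)⌉ : ℚ)) →
          0 ≤ (x i : ℚ) - (x ((2 * (j : ℤ) - (i : ℤ)) % (m : ℤ)).toNat : ℚ)
              + 2 * (⌈((i : ℚ) - (j : ℚ)) / (m : ℚ)⌉ : ℚ)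
              + (⌊(2 * (j : ℚ)) / (m : ℚ)⌋ : ℚ)
              - (⌊(((((2 * (j : ℤ) - (i : ℤ)) % (m : ℤ)).toNat : ℚ)) + (i : ℚ)) / (m : ℚ)⌋ : ℚ)) ∧
        (((x i : ℚ) + (⌈((i : ℚ) - (j : ℚ)) / (m : ℚ)⌉ : ℚ) < (x j : ℚ)) →
          0 ≤ (x j : ℚ) - (x ((2 * (j : ℤ) - (i : ℤ)) % (m : ℤ)).toNat : ℚ)
              + (⌈((i : ℚ) - (j : ℚ)) / (m : ℚ)⌉ : ℚ)
              + (⌊(2 * (j : ℚ)) / (m : ℚ)⌋ : ℚ)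
              - (⌊(((((2 * (j : ℤ) - (i : ℤ)) % (m : ℤ)).toNat : ℚ)) + (i : ℚ)) / (m : ℚ)⌋ : ℚ))) := by
  have hmZ : (0:ℤ) < (m:ℤ) := by exact_mod_cast hm0
  set r : ℕ := ((2 * (j : ℤ) - (i : ℤ)) % (m : ℤ)).toNat with hrdef
  have hr0 : (0:ℤ) ≤ (2 * (j : ℤ) - (i : ℤ)) % (m : ℤ) := Int.emod_nonneg _ hmZ.ne'
  have hrm : (2 * (j : ℤ) - (i : ℤ)) % (m : ℤ) < m := Int.emod_lt_of_pos _ hmZ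
  have hrZ : (r : ℤ) = (2 * (j : ℤ) - (i : ℤ)) % (m : ℤ) := Int.toNat_of_nonneg hr0
  set q : ℤ := (2 * (j : ℤ) - (i : ℤ)) / (m : ℤ) with hqdef
  have hq : (m:ℤ) * q + r = 2 * (j:ℤ) - i := by
    rw [hrZ]; exact Int.mul_ediv_add_emod _ _
  set c : ℤ := if j < i then 1 else 0 with hcdef
  have hceil : ⌈((i : ℚ) - (j : ℚ)) / (m : ℚ)⌉ = c := by
    have e : ((i:ℚ) - j) / m = -((((j:ℤ) - (i:ℤ) : ℤ) : ℚ) / ((m:ℕ) : ℚ)) := by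
      push_cast; ring
    rw [e, Int.ceil_neg, Rat.floor_intCast_div_natCast]
    rcases lt_or_ge j i with h|h
    · rw [(myediv ((j:ℤ)-i) m (-1) ((m:ℤ) + j - i) hmZ (by omega) (by omega) (by ring)).1,
        hcdef, if_pos h]; norm_num
    · rw [(myediv ((j:ℤ)-i) m 0 ((j:ℤ)-i) hmZ (by omega) (by omega) (by ring)).1,
        hcdef, if_neg (by omega)]; norm_num
  have hfloor1 : ⌊(2 * (j : ℚ)) / (m : ℚ)⌋ = (2*(j:ℤ)) / (m:ℤ) := by
    rw [show (2 * (j:ℚ)) = ((2*(j:ℤ) : ℤ) : ℚ) by push_cast; ring,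
      show ((m:ℚ)) = ((m:ℕ) : ℚ) by norm_cast]
    exact Rat.floor_intCast_div_natCast _ _
  have hfloor2 : ⌊((r : ℚ) + (i : ℚ)) / (m : ℚ)⌋ = ((r:ℤ) + i) / (m:ℤ) := by
    rw [show ((r:ℚ) + i) = (((r:ℤ) + i : ℤ) : ℚ) by push_cast; ring,
      show ((m:ℚ)) = ((m:ℕ) : ℚ) by norm_cast]
    exact Rat.floor_intCast_div_natCast _ _
  have hqq : (2*(j:ℤ)) / (m:ℤ) - ((r:ℤ) + i) / (m:ℤ) = q := by
    have e : (2*(j:ℤ)) = ((r:ℤ) + i) + q * m := by linarith [mul_comm (m:ℤ) q]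
    rw [e, Int.add_mul_ediv_right _ _ hmZ.ne']; ring
  set k : ℤ := (wj - wi) / (m:ℤ) with hkdef
  have hk : k = (x j : ℤ) - x i - c := by
    rw [hkdef]
    refine (myediv _ _ _ (c*m + (j:ℤ) - i) hmZ ?_ ?_ ?_).1
    · rcases lt_or_ge j i with h|h
      · rw [hcdef, if_pos h]; omega
      · rw [hcdef, if_neg (by omega)]; omega
    · rcases lt_or_ge j i with h|h
      · rw [hcdef, if_pos h]; omega
      · rw [hcdef, if_neg (by omega)]; omega
    · rw [hwi, hwj]; ring
  have hlhs : (wr ≤ 2 * wj - wi - m * min ((wj - wi)/m) (2*((wj - wi)/m))) ↔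
      ((x r : ℤ) ≤ 2*(x j : ℤ) - (x i : ℤ) + q - min k (2*k)) := by
    have e : 2 * wj - wi - (m:ℤ) * min ((wj - wi)/m) (2*((wj - wi)/m))
        = (2*(x j : ℤ) - (x i : ℤ) + q - min k (2*k)) * m + r := by
      rw [← hkdef, hwi, hwj]
      linear_combination -hq
    rw [hwr, e]
    constructor
    · intro h
      exact le_of_mul_le_mul_right (by linarith) hmZ
    · intro h
      have := mul_le_mul_of_nonneg_right h hmZ.le
      linarith
  rw [hlhs, hceil, hfloor1, hfloor2]
  constructor
  · intro h
    constructor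
    · intro h1
      have h1' : (x j : ℤ) ≤ (x i : ℤ) + c := by exact_mod_cast h1
      have hmin : min k (2*k) = 2*k := min_eq_right (by omega)
      rw [hmin] at h
      have hfin : (0:ℤ) ≤ (x i : ℤ) - (x r : ℤ) + 2*c + ((2*(j:ℤ))/(m:ℤ)) - (((r:ℤ)+i)/(m:ℤ)) := by
        linarith [h, hk, hqq, h1']
      exact_mod_cast hfin
    · intro h2
      have h2' : (x i : ℤ) + c < (x j : ℤ) := by exact_mod_cast h2
      have hmin : min k (2*k) = k := min_eq_left (by omega)
      rw [hmin] at h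
      have hfin : (0:ℤ) ≤ (x j : ℤ) - (x r : ℤ) + c + ((2*(j:ℤ))/(m:ℤ)) - (((r:ℤ)+i)/(m:ℤ)) := by
        linarith [h, hk, hqq, h2']
      exact_mod_cast hfin
  · rintro ⟨h1, h2⟩
    rcases le_or_gt (x j : ℤ) ((x i : ℤ) + c) with hcase|hcase
    · have h1' : (0:ℤ) ≤ (x i : ℤ) - (x r : ℤ) + 2*c + ((2*(j:ℤ))/(m:ℤ)) - (((r:ℤ)+i)/(m:ℤ)) := by
        exact_mod_cast h1 (by exact_mod_cast hcase)
      have hmin : min k (2*k) = 2*k := min_eq_right (by omega)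
      rw [hmin]; linarith [h1', hk, hqq, hcase]
    · have h2' : (0:ℤ) ≤ (x j : ℤ) - (x r : ℤ) + c + ((2*(j:ℤ))/(m:ℤ)) - (((r:ℤ)+i)/(m:ℤ)) := by
        exact_mod_cast h2 (by exact_mod_cast hcase)
      have hmin : min k (2*k) = k := min_eq_left (by omega)
      rw [hmin]; linarith [h2', hk, hqq, hcase]

theorem arf_iff_kunz_condition (S : Set ℕ) (hS : IsNumericalSemigroup S)
    (m : ℕ) (hm : m = multiplicityOf S) (x : ℕ → ℕ) (hx0 : x 0 = 0)
    (hx : ∀ i < m, aperyW S m i = x i * m + i) :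
    HasArfProperty S ↔
      ∀ i < m, ∀ j < m,
        (((x j : ℚ) ≤ (x i : ℚ) + (⌈((i : ℚ) - (j : ℚ)) / (m : ℚ)⌉ : ℚ)) →
          0 ≤ (x i : ℚ) - (x ((2 * (j : ℤ) - (i : ℤ)) % (m : ℤ)).toNat : ℚ)
              + 2 * (⌈((i : ℚ) - (j : ℚ)) / (m : ℚ)⌉ : ℚ)
              + (⌊(2 * (j : ℚ)) / (m : ℚ)⌋ : ℚ)
              - (⌊(((((2 * (j : ℤ) - (i : ℤ)) % (m : ℤ)).toNat : ℚ)) + (i : ℚ)) / (m : ℚ)⌋ : ℚ)) ∧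
        (((x i : ℚ) + (⌈((i : ℚ) - (j : ℚ)) / (m : ℚ)⌉ : ℚ) < (x j : ℚ)) →
          0 ≤ (x j : ℚ) - (x ((2 * (j : ℤ) - (i : ℤ)) % (m : ℤ)).toNat : ℚ)
              + (⌈((i : ℚ) - (j : ℚ)) / (m : ℚ)⌉ : ℚ)
              + (⌊(2 * (j : ℚ)) / (m : ℚ)⌋ : ℚ)
              - (⌊(((((2 * (j : ℤ) - (i : ℤ)) % (m : ℤ)).toNat : ℚ)) + (i : ℚ)) / (m : ℚ)⌋ : ℚ)) := by
  obtain ⟨h0S, hadd, hfin⟩ := hS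
  obtain ⟨B, hB⟩ := hfin.bddAbove
  have hN : ∀ n : ℕ, B + 1 ≤ n → n ∈ S := by
    intro n hn; by_contra h; exact absurd (hB h) (by omega)
  have hmS' : m ∈ S ∧ 0 < m := by
    have h1 : ({n : ℕ | n ∈ S ∧ 0 < n}).Nonempty := ⟨B+1, ⟨hN _ le_rfl, Nat.succ_pos B⟩⟩
    have h2 := Nat.sInf_mem h1
    rw [hm]
    exact h2
  obtain ⟨hmS, hmpos⟩ := hmS'
  have hmZ : (0:ℤ) < (m:ℤ) := by exact_mod_cast hmpos
  have hmul : ∀ n, n ∈ S → ∀ c : ℕ, n + c * m ∈ S := by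
    intro n hn c
    induction c with
    | zero => simpa using hn
    | succ c ih =>
      have h := hadd _ ih _ hmS
      rw [show n + (c+1)*m = n + c*m + m by ring]
      exact h
  have hwmem : ∀ i, i < m → aperyW S m i ∈ S ∧ aperyW S m i % m = i := by
    intro i hi
    have h : aperyW S m i ∈ {s : ℕ | s ∈ S ∧ s % m = i} := by
      apply Nat.sInf_mem
      refine ⟨i + (B+1) * m, hN _ ?_, ?_⟩
      · have := Nat.mul_le_mul_left (B+1) hmpos
        omega
      · rw [Nat.add_mul_mod_self_right, Nat.mod_eq_of_lt hi]
    exact h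
  have hwmin : ∀ i, ∀ s, s ∈ S → s % m = i → aperyW S m i ≤ s :=
    fun i s hs hsi => Nat.sInf_le ⟨hs, hsi⟩
  have hmem : ∀ n : ℕ, n ∈ S ↔ aperyW S m (n % m) ≤ n := by
    intro n
    constructor
    · exact fun hn => hwmin _ _ hn rfl
    · intro hle
      obtain ⟨hwS, hwm⟩ := hwmem (n % m) (Nat.mod_lt _ hmpos)
      obtain ⟨c, hc⟩ : m ∣ n - aperyW S m (n % m) := (Nat.modEq_iff_dvd' hle).mp hwm
      have e : n = aperyW S m (n % m) + c * m := by
        rw [mul_comm c m]; omega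
      rw [e]
      exact hmul _ hwS c
  have hmodr : ∀ u v : ℕ, ∀ i, i < m → ∀ j, j < m → u % m = i → v % m = j →
      ∀ n : ℕ, (n:ℤ) = 2*(v:ℤ) - u → n % m = ((2*(j:ℤ) - (i:ℤ)) % (m:ℤ)).toNat := by
    intro u v i hi j hj hui hvj n hn
    have h1 : ((n % m : ℕ) : ℤ) = ((n : ℤ)) % m := Int.natCast_mod n m
    have hu' : Int.ModEq (m:ℤ) (u:ℤ) (i:ℤ) := by
      show ((u:ℤ)) % m = (i:ℤ) % m
      rw [← Int.natCast_mod, hui, Int.emod_eq_of_lt (by positivity) (by exact_mod_cast hi)]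
    have hv' : Int.ModEq (m:ℤ) (v:ℤ) (j:ℤ) := by
      show ((v:ℤ)) % m = (j:ℤ) % m
      rw [← Int.natCast_mod, hvj, Int.emod_eq_of_lt (by positivity) (by exact_mod_cast hj)]
    have hmodeq : ((n:ℤ)) % m = (2*(j:ℤ) - i) % m := by
      rw [hn]
      exact Int.ModEq.sub (Int.ModEq.mul_left 2 hv') hu'
    have h2 : ((n % m : ℕ):ℤ) = ((((2*(j:ℤ) - i) % (m:ℤ)).toNat : ℕ) : ℤ) := by
      rw [h1, hmodeq, Int.toNat_of_nonneg (Int.emod_nonneg _ hmZ.ne')]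
    exact_mod_cast h2
  have hpos : ∀ z w : ℤ, 0 ≤ w → (m:ℤ)*z = w → 0 ≤ z := by
    intro z w hw hzw
    by_contra h
    push_neg at h
    nlinarith [mul_pos hmZ (by linarith : (0:ℤ) < -z)]
  have hKZiff : (∀ s ∈ S, ∀ t ∈ S, t ≤ s → 2*s - t ∈ S) ↔
      (∀ i, i < m → ∀ j, j < m →
        (aperyW S m (((2*(j:ℤ) - (i:ℤ)) % (m:ℤ)).toNat) : ℤ) ≤
          2*(aperyW S m j : ℤ) - (aperyW S m i : ℤ)
            - m * min (((aperyW S m j : ℤ) - (aperyW S m i : ℤ))/(m:ℤ))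
                (2*(((aperyW S m j : ℤ) - (aperyW S m i : ℤ))/(m:ℤ)))) := by
    constructor
    · intro H2 i hi j hj
      obtain ⟨hwiS, hwim⟩ := hwmem i hi
      obtain ⟨hwjS, hwjm⟩ := hwmem j hj
      set wi := aperyW S m i with hwidef
      set wj := aperyW S m j with hwjdef
      set k : ℤ := ((wj:ℤ) - (wi:ℤ))/(m:ℤ) with hkdef
      have hdm : (m:ℤ) * k + ((wj:ℤ) - wi) % m = (wj:ℤ) - wi := Int.mul_ediv_add_emod _ _
      have hrem0 : 0 ≤ ((wj:ℤ) - wi) % m := Int.emod_nonneg _ hmZ.ne'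
      have hremm : ((wj:ℤ) - wi) % m < m := Int.emod_lt_of_pos _ hmZ
      rcases le_or_gt 0 k with hk|hk
      · have hkt : ((k.toNat : ℕ) : ℤ) = k := Int.toNat_of_nonneg hk
        have htS : wi + k.toNat * m ∈ S := hmul _ hwiS _
        have htsZ : (wi:ℤ) + (k.toNat : ℤ) * m ≤ (wj:ℤ) := by
          rw [hkt]; linarith [mul_comm (m:ℤ) k]
        have hts : wi + k.toNat * m ≤ wj := by exact_mod_cast htsZ
        have hnS : 2*wj - (wi + k.toNat*m) ∈ S := H2 wj hwjS _ htS hts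
        set n := 2*wj - (wi + k.toNat*m) with hndef
        have hnZ : (n:ℤ) = 2*(wj:ℤ) - wi - k * m := by
          have h1 : ((n:ℕ) : ℤ) = 2*(wj:ℤ) - ((wi:ℤ) + ((k.toNat : ℕ):ℤ)*(m:ℤ)) := by
            rw [hndef]
            push_cast [show wi + k.toNat*m ≤ 2*wj by omega]
            ring
          rw [h1, hkt]; ring
        have hrmod : n % m = ((2*(j:ℤ) - (i:ℤ)) % (m:ℤ)).toNat := by
          apply hmodr (wi + k.toNat*m) wj i hi j hj ?_ hwjm n ?_
          · rw [Nat.add_mul_mod_self_right]; exact hwim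
          · rw [hnZ]; push_cast [hkt]; ring
        have hfin := (hmem n).mp hnS
        rw [hrmod] at hfin
        have hfinZ : (aperyW S m (((2*(j:ℤ) - (i:ℤ)) % (m:ℤ)).toNat) : ℤ) ≤ (n:ℤ) := by
          exact_mod_cast hfin
        rw [hnZ] at hfinZ
        rw [min_eq_left (by linarith : k ≤ 2*k)]
        linarith [mul_comm (m:ℤ) k]
      · have hkt : (((-k).toNat : ℕ) : ℤ) = -k := Int.toNat_of_nonneg (by linarith)
        have hsS : wj + (-k).toNat * m ∈ S := hmul _ hwjS _
        have htsZ : (wi:ℤ) ≤ (wj:ℤ) + (((-k).toNat : ℕ) : ℤ) * m := by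
          rw [hkt]; linarith [mul_comm (m:ℤ) k]
        have hts : wi ≤ wj + (-k).toNat * m := by exact_mod_cast htsZ
        have hnS : 2*(wj + (-k).toNat*m) - wi ∈ S := H2 _ hsS wi hwiS hts
        set n := 2*(wj + (-k).toNat*m) - wi with hndef
        have hnZ : (n:ℤ) = 2*(wj:ℤ) - wi - 2*(k * m) := by
          have h1 : ((n:ℕ) : ℤ) = 2*((wj:ℤ) + (((-k).toNat : ℕ):ℤ)*(m:ℤ)) - wi := by
            rw [hndef]
            push_cast [show wi ≤ 2*(wj + (-k).toNat*m) by omega]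
            ring
          rw [h1, hkt]; ring
        have hrmod : n % m = ((2*(j:ℤ) - (i:ℤ)) % (m:ℤ)).toNat := by
          apply hmodr wi (wj + (-k).toNat*m) i hi j hj hwim ?_ n ?_
          · rw [Nat.add_mul_mod_self_right]; exact hwjm
          · rw [hnZ]; push_cast [hkt]; ring
        have hfin := (hmem n).mp hnS
        rw [hrmod] at hfin
        have hfinZ : (aperyW S m (((2*(j:ℤ) - (i:ℤ)) % (m:ℤ)).toNat) : ℤ) ≤ (n:ℤ) := by
          exact_mod_cast hfin
        rw [hnZ] at hfinZ
        rw [min_eq_right (by linarith : 2*k ≤ k)]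
        linarith [mul_comm (m:ℤ) k]
    · intro hKZ s hs t ht hts
      have hi : t % m < m := Nat.mod_lt _ hmpos
      have hj : s % m < m := Nat.mod_lt _ hmpos
      obtain ⟨hwiS, hwim⟩ := hwmem (t % m) hi
      obtain ⟨hwjS, hwjm⟩ := hwmem (s % m) hj
      set wi := aperyW S m (t % m) with hwidef
      set wj := aperyW S m (s % m) with hwjdef
      have hwit : wi ≤ t := hwmin _ _ ht rfl
      have hwjs : wj ≤ s := hwmin _ _ hs rfl
      obtain ⟨a, ha⟩ : (m:ℤ) ∣ (t:ℤ) - wi := by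
        apply Int.ModEq.dvd
        show ((wi:ℤ)) % m = (t:ℤ) % m
        rw [← Int.natCast_mod, ← Int.natCast_mod, hwim]
      obtain ⟨b, hb⟩ : (m:ℤ) ∣ (s:ℤ) - wj := by
        apply Int.ModEq.dvd
        show ((wj:ℤ)) % m = (s:ℤ) % m
        rw [← Int.natCast_mod, ← Int.natCast_mod, hwjm]
      have ha0 : 0 ≤ a := hpos a _ (by exact_mod_cast sub_nonneg.mpr (show (wi:ℤ) ≤ t by exact_mod_cast hwit)) ha.symm
      have hb0 : 0 ≤ b := hpos b _ (by exact_mod_cast sub_nonneg.mpr (show (wj:ℤ) ≤ s by exact_mod_cast hwjs)) hb.symm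
      set k : ℤ := ((wj:ℤ) - (wi:ℤ))/(m:ℤ) with hkdef
      have hdm : (m:ℤ) * k + ((wj:ℤ) - wi) % m = (wj:ℤ) - wi := Int.mul_ediv_add_emod _ _
      have hrem0 : 0 ≤ ((wj:ℤ) - wi) % m := Int.emod_nonneg _ hmZ.ne'
      have hremm : ((wj:ℤ) - wi) % m < m := Int.emod_lt_of_pos _ hmZ
      have htsZ : (t:ℤ) ≤ (s:ℤ) := by exact_mod_cast hts
      have hab : a - b ≤ k := by
        have h1 : (m:ℤ) * (a - b) < (m:ℤ) * (k+1) := by linarith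
        have h2 := lt_of_mul_lt_mul_left h1 hmZ.le
        omega
      have key : -(min k (2*k)) ≤ 2*b - a := by
        rcases le_or_gt 0 k with h|h
        · rw [min_eq_left (by linarith)]; omega
        · rw [min_eq_right (by linarith)]; omega
      have hKZ' := hKZ (t % m) hi (s % m) hj
      rw [hmem]
      have hnZ : ((2*s - t : ℕ) : ℤ) = 2*(s:ℤ) - t := by
        push_cast [show t ≤ 2*s by omega]; ring
      have hrmod : (2*s - t) % m = ((2*((s % m : ℕ):ℤ) - ((t % m : ℕ):ℤ)) % (m:ℤ)).toNat :=
        hmodr t s (t % m) hi (s % m) hj rfl rfl _ hnZ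
      rw [hrmod]
      have hmul1 : (m:ℤ) * (-(min k (2*k))) ≤ (m:ℤ) * (2*b - a) :=
        mul_le_mul_of_nonneg_left key hmZ.le
      have hfinal : (aperyW S m (((2*((s % m : ℕ):ℤ) - ((t % m : ℕ):ℤ)) % (m:ℤ)).toNat) : ℤ)
          ≤ ((2*s - t : ℕ) : ℤ) := by
        rw [hnZ]
        calc (aperyW S m (((2*((s % m : ℕ):ℤ) - ((t % m : ℕ):ℤ)) % (m:ℤ)).toNat) : ℤ)
            ≤ 2*(wj:ℤ) - wi - m * min k (2*k) := hKZ'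
          _ ≤ 2*(s:ℤ) - t := by linarith
      exact_mod_cast hfinal
  constructor
  · intro hArf i hi j hj
    have hH2 : ∀ s ∈ S, ∀ t ∈ S, t ≤ s → 2*s - t ∈ S := by
      intro s hs t ht h
      have h2 := hArf s hs s hs t ht h le_rfl
      rwa [show s + s - t = 2*s - t by omega] at h2
    have hkz := hKZiff.mp hH2 i hi j hj
    have hrlt : ((2*(j:ℤ) - (i:ℤ)) % (m:ℤ)).toNat < m := by
      have h1 := Int.emod_lt_of_pos (2*(j:ℤ) - (i:ℤ)) hmZ
      have h2 := Int.emod_nonneg (2*(j:ℤ) - (i:ℤ)) hmZ.ne'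
      omega
    exact (pair_iff m hmpos x i j hi hj _ _ _ (by exact_mod_cast hx i hi)
      (by exact_mod_cast hx j hj) (by exact_mod_cast hx _ hrlt)).mp hkz
  · intro hR
    apply arf_of_two
    apply hKZiff.mpr
    intro i hi j hj
    have hrlt : ((2*(j:ℤ) - (i:ℤ)) % (m:ℤ)).toNat < m := by
      have h1 := Int.emod_lt_of_pos (2*(j:ℤ) - (i:ℤ)) hmZ
      have h2 := Int.emod_nonneg (2*(j:ℤ) - (i:ℤ)) hmZ.ne'
      omega
    exact (pair_iff m hmpos x i j hi hj _ _ _ (by exact_mod_cast hx i hi)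
      (by exact_mod_cast hx j hj) (by exact_mod_cast hx _ hrlt)).mpr (hR i hi j hj)
end

section
/- Let S be a numerical semigroup with the Arf property, multiplicity m and conductor c. For each j ∈ {2, 3, …, m−1}: (i) if w(j−1) < w(j), then c ≤ w(j) − 1; (ii) if w(j) < w(j−1), then c ≤ w(j−1). -/
theorem arf_conductor_le_aperyW (S : Set ℕ) (hS : IsNumericalSemigroup S)
    (hA : HasArfProperty S) (m : ℕ) (hm : m = multiplicityOf S) :
    ∀ j, 2 ≤ j → j ≤ m - 1 →
      (aperyW S m (j - 1) < aperyW S m j → conductorOf S ≤ aperyW S m j - 1) ∧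
      (aperyW S m j < aperyW S m (j - 1) → conductorOf S ≤ aperyW S m (j - 1)) := by

  intro j hj2 hjm
  obtain ⟨h0, hadd, hfin⟩ := hS
  -- a bound beyond which everything is in S
  obtain ⟨N, hN⟩ : ∃ N, ∀ n, N ≤ n → n ∈ S := by
    refine ⟨(hfin.toFinset.sup id) + 1, fun n hn => ?_⟩
    by_contra h
    have h1 : n ∈ hfin.toFinset := by simpa using h
    have h2 := Finset.le_sup (f := id) h1
    simp only [id] at h2
    omega
  have hmS : m ∈ S ∧ 0 < m := by
    have h := Nat.sInf_mem (s := {n | n ∈ S ∧ 0 < n})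
      ⟨N + 1, hN _ (Nat.le_succ N), Nat.succ_pos N⟩
    rw [hm]; exact h
  have hm3 : 3 ≤ m := by omega
  have hjm' : j < m := by omega
  -- Apéry elements exist
  have hap : ∀ i, i < m → aperyW S m i ∈ S ∧ aperyW S m i % m = i := by
    intro i hi
    have hne : {s | s ∈ S ∧ s % m = i}.Nonempty := by
      refine ⟨i + m * (N + 1), hN _ ?_, ?_⟩
      · have h1 : N + 1 ≤ m * (N + 1) := Nat.le_mul_of_pos_left _ (by omega)
        omega
      · rw [Nat.add_mul_mod_self_left, Nat.mod_eq_of_lt hi]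
    exact Nat.sInf_mem hne
  have ha := hap (j - 1) (by omega)
  have hb := hap j hjm'
  set a := aperyW S m (j - 1) with hadef
  set b := aperyW S m j with hbdef
  -- S is closed under adding multiples of m
  have hkm : ∀ k s, s ∈ S → s + k * m ∈ S := by
    intro k
    induction k with
    | zero => simp
    | succ k ih =>
      intro s hs
      have h1 := hadd _ (ih s hs) _ hmS.1
      have e : s + (k + 1) * m = s + k * m + m := by ring
      rwa [e]
  -- two consecutive elements force the conductor
  have L2 : ∀ t, t ∈ S → t + 1 ∈ S → conductorOf S ≤ t := by
    intro t ht ht1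
    have hall : ∀ n, t ≤ n → n ∈ S := by
      intro n hn
      induction n, hn using Nat.le_induction with
      | base => exact ht
      | succ n hn ih =>
        rcases Nat.eq_or_lt_of_le hn with h | h
        · exact h ▸ ht1
        · have h2 := hA n ih (t + 1) ht1 t ht (by omega) (by omega)
          have e : n + (t + 1) - t = n + 1 := by omega
          rwa [e] at h2
    rw [conductorOf]
    exact Nat.sInf_le hall
  have hda := Nat.div_add_mod a m
  have hdb := Nat.div_add_mod b m
  rw [ha.2] at hda
  rw [hb.2] at hdb
  constructor
  · -- case w(j-1) < w(j)
    intro hlt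
    have hq : a / m ≤ b / m := by
      by_contra h
      push_neg at h
      have h1 : m * (b / m) + m ≤ m * (a / m) := by
        have := Nat.mul_le_mul_left m h
        calc m * (b / m) + m = m * (b / m + 1) := by ring
          _ ≤ m * (a / m) := Nat.mul_le_mul_left m h
      omega
    have hsplit : m * (b / m) = m * (a / m) + m * (b / m - a / m) := by
      rw [← Nat.mul_add, Nat.add_sub_cancel' hq]
    set k := b / m - a / m with hk
    have hbe : b = a + k * m + 1 := by
      have e1 : k * m = m * k := Nat.mul_comm _ _
      omega
    have htS : a + k * m ∈ S := hkm k a ha.1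
    have ht1S : a + k * m + 1 ∈ S := hbe ▸ hb.1
    have := L2 _ htS ht1S
    have e : b - 1 = a + k * m := by omega
    rw [e]
    exact this
  · -- case w(j) < w(j-1)
    intro hlt
    have hq : b / m < a / m := by
      by_contra h
      push_neg at h
      have h1 : m * (a / m) ≤ m * (b / m) := Nat.mul_le_mul_left m h
      omega
    have hsplit : m * (a / m) = m * (b / m) + m * (a / m - b / m) := by
      rw [← Nat.mul_add, Nat.add_sub_cancel' (le_of_lt hq)]
    set k := a / m - b / m with hk
    have hae : a + 1 = b + k * m := by
      have e1 : k * m = m * k := Nat.mul_comm _ _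
      omega
    have ha1S : a + 1 ∈ S := hae ▸ hkm k b hb.1
    exact L2 a ha.1 ha1S
end

section
/- Let S be a numerical semigroup with the Arf property, multiplicity m, conductor c and Kunz coordinates (x_1, …, x_{m−1}). For every i ∈ {2, …, m−1}: (i) if x_{i−1} ≤ x_i, then (c − i + 1)/m ≤ x_i; (ii) if x_i ≤ x_{i−1}, then (c − i + 1)/m ≤ x_{i−1}. (The inequalities are inequalities of rational numbers.) -/
section Aux

lemma ns_add_mul (S : Set ℕ) (hS : IsNumericalSemigroup S) {a b : ℕ} (ha : a ∈ S)
    (hb : b ∈ S) (k : ℕ) : a + k * b ∈ S := by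
  induction k with
  | zero => simpa using ha
  | succ k ih =>
    have h := hS.2.1 _ ih _ hb
    have : a + k * b + b = a + (k + 1) * b := by ring
    rwa [this] at h

lemma arf_tail (S : Set ℕ) (hA : HasArfProperty S) {a : ℕ} (ha : a ∈ S)
    (ha1 : a + 1 ∈ S) : ∀ n, a ≤ n → n ∈ S := by
  have key : ∀ k, a + k ∈ S ∧ a + k + 1 ∈ S := by
    intro k
    induction k with
    | zero => exact ⟨ha, ha1⟩
    | succ k ih =>
      refine ⟨(by omega : a + k + 1 = a + (k + 1)) ▸ ih.2, ?_⟩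
      have h := hA _ ih.2 _ ih.2 _ ih.1 (Nat.le_succ _) (le_refl _)
      have h2 : a + k + 1 + (a + k + 1) - (a + k) = a + (k + 1) + 1 := by omega
      rwa [h2] at h
  intro n hn
  have := (key (n - a)).1
  rwa [Nat.add_sub_cancel' hn] at this

lemma ns_exists_bound (S : Set ℕ) (hS : IsNumericalSemigroup S) :
    ∃ B, ∀ n, B ≤ n → n ∈ S := by
  obtain ⟨B, hB⟩ := hS.2.2.bddAbove
  refine ⟨B + 1, fun n hn => by_contra fun h => ?_⟩
  have : n ≤ B := hB h
  omega

end Aux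

theorem arf_kunz_lower_bound (S : Set ℕ) (hS : IsNumericalSemigroup S)
    (hA : HasArfProperty S) (m : ℕ) (hm : m = multiplicityOf S)
    (c : ℕ) (hc : c = conductorOf S) (x : ℕ → ℕ)
    (hx : ∀ i < m, aperyW S m i = x i * m + i) :
    ∀ i, 2 ≤ i → i ≤ m - 1 →
      (x (i - 1) ≤ x i → ((c : ℚ) - (i : ℚ) + 1) / (m : ℚ) ≤ (x i : ℚ)) ∧
      (x i ≤ x (i - 1) → ((c : ℚ) - (i : ℚ) + 1) / (m : ℚ) ≤ (x (i - 1) : ℚ)) := by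

  intro i hi2 him
  obtain ⟨B, hB⟩ := ns_exists_bound S hS
  have hmS : m ∈ S ∧ 0 < m := by
    have hne : {n | n ∈ S ∧ 0 < n}.Nonempty := ⟨B + 1, hB _ (Nat.le_succ _), by omega⟩
    rw [hm, multiplicityOf]
    exact Nat.sInf_mem hne
  have hmpos : 0 < m := hmS.2
  obtain ⟨j, rfl⟩ : ∃ j, i = j + 1 := ⟨i - 1, by omega⟩
  have hj1 : 1 ≤ j := by omega
  have hjm : j + 1 < m := by omega
  simp only [Nat.add_sub_cancel]
  have wmem : ∀ k, k < m → x k * m + k ∈ S := by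
    intro k hk
    have hle : B ≤ k + (B + 1) * m := by
      have h1 : (B + 1) * 1 ≤ (B + 1) * m := Nat.mul_le_mul_left _ hmpos
      omega
    have hne : {s | s ∈ S ∧ s % m = k}.Nonempty :=
      ⟨k + (B + 1) * m, hB _ hle, by
        simp [Nat.add_mul_mod_self_right, Nat.mod_eq_of_lt hk]⟩
    have h := Nat.sInf_mem hne
    have heq : sInf {s | s ∈ S ∧ s % m = k} = x k * m + k := hx k hk
    rw [heq] at h
    exact h.1
  have hcle : ∀ a, a ∈ S → a + 1 ∈ S → c ≤ a := by
    intro a ha ha1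
    rw [hc, conductorOf]
    exact Nat.sInf_le (fun n hn => arf_tail S hA ha ha1 n hn)
  have rat : ∀ y : ℕ, c ≤ y * m + j →
      ((c : ℚ) - ((j + 1 : ℕ) : ℚ) + 1) / (m : ℚ) ≤ (y : ℚ) := by
    intro y hy
    rw [div_le_iff₀ (by exact_mod_cast hmpos)]
    have hcq : (c : ℚ) ≤ (y : ℚ) * (m : ℚ) + (j : ℚ) := by exact_mod_cast hy
    push_cast
    linarith
  have hwj : x j * m + j ∈ S := wmem j (by omega)
  have hwj1 : x (j + 1) * m + (j + 1) ∈ S := wmem (j + 1) hjm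
  constructor
  · intro hxle
    have hmemA : x (j + 1) * m + j ∈ S := by
      have h := ns_add_mul S hS hwj hmS.1 (x (j + 1) - x j)
      have heq : x j * m + j + (x (j + 1) - x j) * m = x (j + 1) * m + j := by
        have : x j * m + (x (j + 1) - x j) * m = x (j + 1) * m := by
          rw [← Nat.add_mul]
          congr 1
          omega
        omega
      rwa [heq] at h
    have hmemB : x (j + 1) * m + j + 1 ∈ S := by
      have : x (j + 1) * m + j + 1 = x (j + 1) * m + (j + 1) := by omega
      rw [this]; exact hwj1
    exact rat (x (j + 1)) (hcle _ hmemA hmemB)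
  · intro hxle
    have hmemB : x j * m + j + 1 ∈ S := by
      have h := ns_add_mul S hS hwj1 hmS.1 (x j - x (j + 1))
      have heq : x (j + 1) * m + (j + 1) + (x j - x (j + 1)) * m
          = x j * m + j + 1 := by
        have : x (j + 1) * m + (x j - x (j + 1)) * m = x j * m := by
          rw [← Nat.add_mul]
          congr 1
          omega
        omega
      rwa [heq] at h
    exact rat (x j) (hcle _ hwj hmemB)
end

section
/- Let S be a numerical semigroup with the Arf property, multiplicity m ≥ 2 and conductor c, and write c̄ = c mod m. Then: (i) w(1) = c + 1 if c ≡ 0 (mod m), and w(1) = c − c̄ + m + 1 otherwise; (ii) w(m−1) = c − c̄ + m − 1. -/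
theorem arf_aperyW_one_and_last (S : Set ℕ) (hS : IsNumericalSemigroup S)
    (hA : HasArfProperty S) (m : ℕ) (hm : m = multiplicityOf S) (hm2 : 2 ≤ m)
    (c : ℕ) (hc : c = conductorOf S) :
    ((c % m = 0 → aperyW S m 1 = c + 1) ∧
     (c % m ≠ 0 → aperyW S m 1 = c - c % m + m + 1)) ∧
    aperyW S m (m - 1) = c - c % m + m - 1 := by
  obtain ⟨h0, hadd, hfin⟩ := hS
  -- S contains everything from some point on
  obtain ⟨N, hN⟩ : ∃ N : ℕ, ∀ x ∈ Sᶜ, x ≤ N := hfin.bddAbove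
  have hCne : Set.Nonempty {c' : ℕ | ∀ n, c' ≤ n → n ∈ S} := by
    refine ⟨N + 1, fun n hn => ?_⟩
    by_contra hns
    exact absurd (hN n hns) (by omega)
  have hc_mem : ∀ n, c ≤ n → n ∈ S := by
    rw [hc, conductorOf]; exact Nat.sInf_mem hCne
  have hc_min : ∀ c' : ℕ, (∀ n, c' ≤ n → n ∈ S) → c ≤ c' := by
    intro c' h; rw [hc, conductorOf]; exact Nat.sInf_le h
  have hMne : Set.Nonempty {n : ℕ | n ∈ S ∧ 0 < n} :=
    ⟨c + 1, hc_mem _ (by omega), by omega⟩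
  have hm_mem : m ∈ S ∧ 0 < m := by
    rw [hm, multiplicityOf]; exact Nat.sInf_mem hMne
  have hm_min : ∀ s ∈ S, 0 < s → m ≤ s := by
    intro s hs hpos
    rw [hm, multiplicityOf]
    exact Nat.sInf_le ⟨hs, hpos⟩
  have h1S : (1 : ℕ) ∉ S := fun h1 => by have := hm_min 1 h1 one_pos; omega
  have hc2 : 2 ≤ c := by
    by_contra h
    exact h1S (hc_mem 1 (by omega))
  have hF : c - 1 ∉ S := by
    intro h
    have : c ≤ c - 1 := hc_min (c - 1) (fun n hn => by
      rcases Nat.eq_or_lt_of_le hn with h' | h'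
      · rwa [← h']
      · exact hc_mem n (by omega))
    omega
  -- multiples of m are in S
  have hmul : ∀ k : ℕ, k * m ∈ S := by
    intro k
    induction k with
    | zero => simpa using h0
    | succ n ih =>
      have := hadd _ ih m hm_mem.1
      rwa [Nat.succ_mul]
  -- the key Arf consequence: two consecutive elements force everything above
  have key : ∀ u : ℕ, u ∈ S → u + 1 ∈ S → ∀ n, u + 1 ≤ n → n ∈ S := by
    intro u hu hu1 n hn
    induction n with
    | zero => omega
    | succ k ih =>
      rcases Nat.lt_or_ge k (u + 1) with h | h
      · have : u + 1 = k + 1 := by omega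
        rwa [← this]
      · have hk : k ∈ S := ih h
        have := hA k hk (u + 1) hu1 u hu (by omega) (by omega)
        have heq : k + (u + 1) - u = k + 1 := by omega
        rwa [heq] at this
  -- elements ≡ ±1 (mod m) are at least the conductor
  have hge1 : ∀ s ∈ S, s % m = 1 → c ≤ s := by
    intro s hs hsr
    have hdm : m * (s / m) + s % m = s := Nat.div_add_mod s m
    have hpos : 0 < s := by omega
    have hms : m ≤ s := hm_min s hs hpos
    have hq : 1 ≤ s / m := by
      rcases Nat.eq_zero_or_pos (s / m) with h | h
      · rw [h] at hdm; omega
      · omega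
    have hu : s / m * m ∈ S := hmul _
    have huS : s / m * m + 1 ∈ S := by
      have : s / m * m + 1 = s := by rw [Nat.mul_comm]; omega
      rwa [this]
    exact hc_min s (fun n hn => key _ hu huS n (by rw [Nat.mul_comm]; omega))
  have hgem1 : ∀ s ∈ S, s % m = m - 1 → c ≤ s := by
    intro s hs hsr
    have hdm : m * (s / m) + s % m = s := Nat.div_add_mod s m
    have hpos : 0 < s := by omega
    have hs1 : s + 1 ∈ S := by
      have : (s / m + 1) * m ∈ S := hmul _
      have heq : (s / m + 1) * m = s + 1 := by
        rw [Nat.add_mul, Nat.one_mul, Nat.mul_comm]; omega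
      rwa [heq] at this
    have hcs1 : c ≤ s + 1 := hc_min (s + 1) (fun n hn => key s hs hs1 n hn)
    rcases Nat.eq_or_lt_of_le hcs1 with h | h
    · exfalso; apply hF; have : s = c - 1 := by omega
      rwa [← this]
    · omega
  -- c % m ≠ 1
  have hcm1 : c % m ≠ 1 := by
    intro h
    have hdm : m * (c / m) + c % m = c := Nat.div_add_mod c m
    apply hF
    have : c / m * m ∈ S := hmul _
    have heq : c / m * m = c - 1 := by rw [Nat.mul_comm]; omega
    rwa [heq] at this
  -- general tool to compute aperyW
  have wspec : ∀ r W : ℕ, W ∈ S → W % m = r → (∀ s, s ∈ S → s % m = r → W ≤ s) →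
      aperyW S m r = W := by
    intro r W hW hWr hmin
    have hne : Set.Nonempty {s : ℕ | s ∈ S ∧ s % m = r} := ⟨W, hW, hWr⟩
    have h1 := Nat.sInf_mem hne
    have h2 : sInf {s : ℕ | s ∈ S ∧ s % m = r} ≤ W := Nat.sInf_le ⟨hW, hWr⟩
    exact le_antisymm h2 (hmin _ h1.1 h1.2)
  have hdm : m * (c / m) + c % m = c := Nat.div_add_mod c m
  have hr : c % m < m := Nat.mod_lt _ (by omega)
  have hmono : ∀ a b : ℕ, a ≤ b → m * a ≤ m * b := fun a b h => Nat.mul_le_mul_left m h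
  refine ⟨⟨?_, ?_⟩, ?_⟩
  · -- c % m = 0 → aperyW S m 1 = c + 1
    intro h0m
    apply wspec
    · exact hc_mem _ (by omega)
    · have : c + 1 = 1 + (c / m) * m := by rw [Nat.mul_comm]; omega
      rw [this, Nat.add_mul_mod_self_right, Nat.mod_eq_of_lt (by omega)]
    · intro s hs hsr
      have hcs := hge1 s hs hsr
      have hsdm : m * (s / m) + s % m = s := Nat.div_add_mod s m
      rcases Nat.lt_or_ge (s / m) (c / m) with h | h
      · exfalso
        have := hmono _ _ (show s / m + 1 ≤ c / m by omega)
        rw [Nat.mul_succ] at this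
        omega
      · have := hmono _ _ h
        omega
  · -- c % m ≠ 0 → aperyW S m 1 = c - c % m + m + 1
    intro h0m
    have hc2m : 2 ≤ c % m := by
      rcases Nat.lt_or_ge (c % m) 2 with h | h
      · interval_cases h' : c % m <;> simp_all
      · exact h
    apply wspec
    · exact hc_mem _ (by omega)
    · have : c - c % m + m + 1 = 1 + (c / m + 1) * m := by
        rw [Nat.add_mul, Nat.one_mul, Nat.mul_comm]; omega
      rw [this, Nat.add_mul_mod_self_right, Nat.mod_eq_of_lt (by omega)]
    · intro s hs hsr
      have hcs := hge1 s hs hsr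
      have hsdm : m * (s / m) + s % m = s := Nat.div_add_mod s m
      rcases Nat.lt_or_ge (s / m) (c / m + 1) with h | h
      · exfalso
        have := hmono _ _ (show s / m ≤ c / m by omega)
        omega
      · have := hmono _ _ h
        rw [Nat.mul_succ] at this
        omega
  · -- aperyW S m (m - 1) = c - c % m + m - 1
    apply wspec
    · exact hc_mem _ (by omega)
    · have : c - c % m + m - 1 = (m - 1) + (c / m) * m := by rw [Nat.mul_comm]; omega
      rw [this, Nat.add_mul_mod_self_right, Nat.mod_eq_of_lt (by omega)]
    · intro s hs hsr
      have hcs := hgem1 s hs hsr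
      have hsdm : m * (s / m) + s % m = s := Nat.div_add_mod s m
      rcases Nat.lt_or_ge (s / m) (c / m) with h | h
      · exfalso
        have := hmono _ _ (show s / m + 1 ≤ c / m by omega)
        rw [Nat.mul_succ] at this
        omega
      · have := hmono _ _ h
        omega
end

section
/- Let S be a numerical semigroup with the Arf property, multiplicity m ≥ 2, conductor c and Kunz coordinates (x_1, …, x_{m−1}). Then x_1 = ⌈c/m⌉ and x_{m−1} = ⌊c/m⌋. -/
theorem arf_kunz_first_last (S : Set ℕ) (hS : IsNumericalSemigroup S)
    (hA : HasArfProperty S) (m : ℕ) (hm : m = multiplicityOf S) (hm2 : 2 ≤ m)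
    (c : ℕ) (hc : c = conductorOf S) (x : ℕ → ℕ)
    (hx : ∀ i < m, aperyW S m i = x i * m + i) :
    (x 1 : ℤ) = ⌈(c : ℚ) / (m : ℚ)⌉ ∧ (x (m - 1) : ℤ) = ⌊(c : ℚ) / (m : ℚ)⌋ := by
  obtain ⟨h0, hadd, hfin⟩ := hS
  have hmpos : 0 < m := by omega
  -- the conductor set is nonempty
  have hcne : {c' | ∀ n, c' ≤ n → n ∈ S}.Nonempty := by
    refine ⟨hfin.toFinset.sup id + 1, fun n hn => ?_⟩
    by_contra hns
    have hmem : n ∈ hfin.toFinset := hfin.mem_toFinset.mpr hns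
    have h2 : n ≤ hfin.toFinset.sup id := Finset.le_sup (f := id) hmem
    omega
  have hcmem : ∀ n, c ≤ n → n ∈ S := by
    rw [hc]; exact Nat.sInf_mem hcne
  have hcmin : ∀ a : ℕ, (∀ n, a ≤ n → n ∈ S) → c ≤ a := by
    intro a ha; rw [hc]; exact Nat.sInf_le ha
  have hmS : m ∈ S ∧ 0 < m := by
    rw [hm]; exact Nat.sInf_mem (⟨c + 1, hcmem _ (by omega), by omega⟩ : {n | n ∈ S ∧ 0 < n}.Nonempty)
  have hmmin : ∀ s, s ∈ S → 0 < s → m ≤ s := by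
    intro s hs hp; rw [hm]; exact Nat.sInf_le ⟨hs, hp⟩
  have hcpos : 0 < c := by
    by_contra h
    have h1 : (1:ℕ) ∈ S := hcmem 1 (by omega)
    have := hmmin 1 h1 one_pos
    omega
  have hmul : ∀ k, k * m ∈ S := by
    intro k; induction k with
    | zero => simpa using h0
    | succ k ih =>
      have := hadd _ ih _ hmS.1
      rw [Nat.succ_mul]; exact this
  -- consecutive elements force the conductor
  have hconsec : ∀ a, a ∈ S → a + 1 ∈ S → c ≤ a := by
    intro a ha ha1
    have hall : ∀ j, a + j ∈ S ∧ a + j + 1 ∈ S := by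
      intro j
      induction j with
      | zero => exact ⟨ha, ha1⟩
      | succ k ih =>
        refine ⟨ih.2, ?_⟩
        have h2 := hA (a+k+1) ih.2 (a+k+1) ih.2 (a+k) ih.1 (by omega) (le_refl _)
        have e : a+k+1+(a+k+1)-(a+k) = a + (k+1) + 1 := by omega
        rwa [e] at h2
    refine hcmin a (fun n hn => ?_)
    have := (hall (n - a)).1
    rwa [Nat.add_sub_cancel' hn] at this
  -- elements ≡ 1 (mod m) are ≥ c+1
  have hres1 : ∀ s, s ∈ S → s % m = 1 → c + 1 ≤ s := by
    intro s hs hmod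
    have e := Nat.div_add_mod s m
    have ha : s / m * m ∈ S := hmul _
    have e2 : s / m * m = m * (s / m) := Nat.mul_comm _ _
    have ha1 : s / m * m + 1 ∈ S := by
      rw [show s / m * m + 1 = s by omega]; exact hs
    have := hconsec _ ha ha1
    omega
  -- elements ≡ m-1 (mod m) are ≥ c
  have hresm1 : ∀ s, s ∈ S → s % m = m - 1 → c ≤ s := by
    intro s hs hmod
    have e := Nat.div_add_mod s m
    have e3 : (s / m + 1) * m = m * (s / m) + m := by ring
    have ha1 : s + 1 ∈ S := by
      rw [show s + 1 = (s / m + 1) * m by omega]; exact hmul _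
    exact hconsec s hs ha1
  -- rational floor/ceil facts
  have hmQ : (0:ℚ) < (m:ℚ) := by exact_mod_cast hmpos
  set Q : ℤ := ⌈(c : ℚ) / (m : ℚ)⌉ with hQdef
  set P : ℤ := ⌊(c : ℚ) / (m : ℚ)⌋ with hPdef
  have hQ0 : 0 ≤ Q := Int.ceil_nonneg (by positivity)
  have hP0 : 0 ≤ P := Int.floor_nonneg.mpr (by positivity)
  set qn : ℕ := Q.toNat with hqndef
  set pn : ℕ := P.toNat with hpndef
  have hqnQ : (qn : ℤ) = Q := Int.toNat_of_nonneg hQ0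
  have hpnP : (pn : ℤ) = P := Int.toNat_of_nonneg hP0
  have hcqn : c ≤ qn * m := by
    have h1 : (c:ℚ)/(m:ℚ) ≤ (Q:ℚ) := Int.le_ceil _
    have h2 : (c:ℚ) ≤ (Q:ℚ) * (m:ℚ) := (div_le_iff₀ hmQ).mp h1
    rw [← hqnQ] at h2
    exact_mod_cast h2
  have hpnc : pn * m ≤ c := by
    have h1 : (P:ℚ) ≤ (c:ℚ)/(m:ℚ) := Int.floor_le _
    have h2 : (P:ℚ) * (m:ℚ) ≤ (c:ℚ) := (le_div_iff₀ hmQ).mp h1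
    rw [← hpnP] at h2
    exact_mod_cast h2
  have hcpn : c < pn * m + m := by
    have h1 : (c:ℚ)/(m:ℚ) < (P:ℚ) + 1 := Int.lt_floor_add_one _
    have h2 : (c:ℚ) < ((P:ℚ) + 1) * (m:ℚ) := (div_lt_iff₀ hmQ).mp h1
    have h3 : (c:ℚ) < (P:ℚ) * (m:ℚ) + (m:ℚ) := by linarith [h2]; 
    rw [← hpnP] at h3
    exact_mod_cast h3
  constructor
  · -- x 1 = ⌈c/m⌉
    have hw1ne : {s | s ∈ S ∧ s % m = 1}.Nonempty := by
      refine ⟨qn * m + 1, hcmem _ (by omega), ?_⟩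
      rw [Nat.mul_comm, Nat.mul_add_mod]
      exact Nat.mod_eq_of_lt (by omega)
    have hw1mem : aperyW S m 1 ∈ S ∧ aperyW S m 1 % m = 1 := Nat.sInf_mem hw1ne
    have hw1le : aperyW S m 1 ≤ qn * m + 1 := by
      refine Nat.sInf_le ⟨hcmem _ (by omega), ?_⟩
      rw [Nat.mul_comm, Nat.mul_add_mod]
      exact Nat.mod_eq_of_lt (by omega)
    have hx1 : aperyW S m 1 = x 1 * m + 1 := hx 1 (by omega)
    have hlow : c + 1 ≤ x 1 * m + 1 := by
      rw [← hx1]; exact hres1 _ hw1mem.1 hw1mem.2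
    have hup : x 1 ≤ qn := by
      rw [hx1] at hw1le
      exact Nat.le_of_mul_le_mul_right (by omega) hmpos
    have hge : Q ≤ (x 1 : ℤ) := by
      apply Int.ceil_le.mpr
      rw [div_le_iff₀ hmQ]
      exact_mod_cast (show (c:ℕ) ≤ x 1 * m by omega)
    have hle : (x 1 : ℤ) ≤ Q := by
      rw [← hqnQ]; exact_mod_cast hup
    omega
  · -- x (m-1) = ⌊c/m⌋
    have hmod : (m - 1) % m = m - 1 := Nat.mod_eq_of_lt (by omega)
    have hwne : {s | s ∈ S ∧ s % m = m - 1}.Nonempty := by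
      refine ⟨pn * m + (m - 1), hcmem _ (by omega), ?_⟩
      rw [Nat.mul_comm, Nat.mul_add_mod]; exact hmod
    have hwmem : aperyW S m (m-1) ∈ S ∧ aperyW S m (m-1) % m = m - 1 :=
      Nat.sInf_mem hwne
    have hwle : aperyW S m (m-1) ≤ pn * m + (m - 1) := by
      refine Nat.sInf_le ⟨hcmem _ (by omega), ?_⟩
      rw [Nat.mul_comm, Nat.mul_add_mod]; exact hmod
    have hxm : aperyW S m (m-1) = x (m-1) * m + (m-1) := hx (m-1) (by omega)
    have hlow : c ≤ x (m-1) * m + (m-1) := by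
      rw [← hxm]; exact hresm1 _ hwmem.1 hwmem.2
    have hup : x (m-1) ≤ pn := by
      rw [hxm] at hwle
      exact Nat.le_of_mul_le_mul_right (by omega) hmpos
    have hge : pn ≤ x (m-1) := by
      have e : (x (m-1) + 1) * m = x (m-1) * m + m := by ring
      have h1 : pn * m < (x (m-1) + 1) * m := by omega
      have := Nat.lt_of_mul_lt_mul_right h1
      omega
    have : x (m-1) = pn := le_antisymm hup hge
    rw [this, hpnP]
end

section
/- Let S be a numerical semigroup with the Arf property and multiplicity m > 2. Then for every integer k with 0 < k < m/2, one has w(2k) ≤ w(k) + k and w(m − 2k) ≤ w(m − k) + (m − k). -/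
lemma arf_key (S : Set ℕ) (hS : IsNumericalSemigroup S)
    (hA : HasArfProperty S) (m : ℕ) (hm : m = multiplicityOf S)
    (r : ℕ) (hr0 : 0 < r) (hrm : r < m) :
    aperyW S m ((2 * r) % m) ≤ aperyW S m r + r := by
  obtain ⟨h0, hadd, hfin⟩ := hS
  have hm0 : 0 < m := lt_trans hr0 hrm
  -- bound for complement
  obtain ⟨B, hB⟩ := hfin.bddAbove
  have hbig : ∀ n, B < n → n ∈ S := by
    intro n hn
    by_contra hns
    exact absurd (hB hns) (not_le.mpr hn)
  -- m ∈ S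
  have hmS : m ∈ S := by
    have hne : {n | n ∈ S ∧ 0 < n}.Nonempty := ⟨B + 1, hbig _ (Nat.lt_succ_self B), Nat.succ_pos B⟩
    have := Nat.sInf_mem hne
    rw [hm]; exact this.1
  -- multiples of m are in S
  have hmul : ∀ t : ℕ, m * t ∈ S := by
    intro t
    induction t with
    | zero => simpa using h0
    | succ n ih => have := hadd _ ih _ hmS; simpa [Nat.mul_succ] using this
  -- the set for residue r is nonempty
  have hner : {s | s ∈ S ∧ s % m = r}.Nonempty := by
    refine ⟨m * (B + 1) + r, hbig _ ?_, by simp [Nat.mul_add_mod, Nat.mod_eq_of_lt hrm]⟩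
    calc B < B + 1 := Nat.lt_succ_self B
    _ ≤ m * (B + 1) := Nat.le_mul_of_pos_left _ hm0
    _ < m * (B + 1) + r := Nat.lt_add_of_pos_right hr0
  set w := aperyW S m r with hwdef
  have hw : w ∈ S ∧ w % m = r := Nat.sInf_mem hner
  -- w ≥ m + r
  have hwm : m ≤ w := by
    have hwpos : 0 < w := by
      rcases Nat.eq_zero_or_pos w with h | h
      · exfalso; rw [h] at hw; simp at hw; omega
      · exact h
    have : m ≤ w := by
      rw [hm]
      exact Nat.sInf_le ⟨hw.1, hwpos⟩
    exact this
  set q := w / m with hq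
  have hqm : m * q + r = w := by rw [hq, ← hw.2]; exact Nat.div_add_mod w m
  have hq1 : 1 ≤ q := by
    by_contra h
    push_neg at h
    interval_cases q
    simp at hqm
    omega
  -- 2w - m ∈ S with residue (2r) % m
  have hs1 : w + w - m ∈ S := hA w hw.1 w hw.1 m hmS hwm le_rfl
  have hs1eq : w + w - m = m * (2 * q - 1) + 2 * r := by
    have e2 : m * (2 * q - 1) + m = m * q + m * q := by
      calc m * (2 * q - 1) + m = m * (2 * q - 1 + 1) := by rw [Nat.mul_add, Nat.mul_one]
      _ = m * (q + q) := by congr 1; omega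
      _ = m * q + m * q := by rw [Nat.mul_add]
    omega
  have hs1mod : (w + w - m) % m = (2 * r) % m := by rw [hs1eq, Nat.mul_add_mod]
  have hneu : {s | s ∈ S ∧ s % m = (2 * r) % m}.Nonempty := ⟨w + w - m, hs1, hs1mod⟩
  set u := aperyW S m ((2 * r) % m) with hudef
  have hu : u ∈ S ∧ u % m = (2 * r) % m := Nat.sInf_mem hneu
  have hule : u ≤ w + w - m := Nat.sInf_le ⟨hs1, hs1mod⟩
  by_contra hcon
  push_neg at hcon
  -- u ≡ w + r mod m and u > w + r, so u ≥ w + r + m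
  have hwr : (w + r) % m = (2 * r) % m := by
    have : w + r = m * q + 2 * r := by omega
    rw [this, Nat.mul_add_mod]
  have hdvd : m ∣ u - (w + r) := by
    have : (w + r) ≡ u [MOD m] := by unfold Nat.ModEq; rw [hu.2, hwr]
    exact (Nat.modEq_iff_dvd' (le_of_lt hcon)).mp this
  have hularge : w + r + m ≤ u := by
    obtain ⟨c, hc⟩ := hdvd
    have hc0 : c ≠ 0 := by rintro rfl; simp at hc; omega
    obtain ⟨c', rfl⟩ := Nat.exists_eq_succ_of_ne_zero hc0
    simp only [Nat.succ_eq_add_one] at hc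
    have hms : m * (c' + 1) = m * c' + m := by rw [Nat.mul_add, Nat.mul_one]
    omega
  -- z := 2w + m - u is a positive multiple of m, ≤ w, in S
  have hdvd2 : m ∣ (w + w - u) := by
    have h1 : u ≡ w + w [MOD m] := by
      unfold Nat.ModEq
      have : (w + w) % m = (2 * r) % m := by
        have : w + w = m * (2 * q) + 2 * r := by
          have e3 : m * (2 * q) = m * q + m * q := by
            calc m * (2 * q) = m * (q + q) := by congr 1; omega
            _ = m * q + m * q := by rw [Nat.mul_add]
          omega
        rw [this, Nat.mul_add_mod]
      rw [hu.2, this]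
    have hle : u ≤ w + w := by
      have e2 : m * (2 * q - 1) + m = m * q + m * q := by
        calc m * (2 * q - 1) + m = m * (2 * q - 1 + 1) := by rw [Nat.mul_add, Nat.mul_one]
        _ = m * (q + q) := by congr 1; omega
        _ = m * q + m * q := by rw [Nat.mul_add]
      omega
    exact (Nat.modEq_iff_dvd' hle).mp h1
  obtain ⟨c, hc⟩ := hdvd2
  have hzS : w + w - u ∈ S := by rw [hc]; exact hmul c
  have hzS' : (w + w - u) + m ∈ S := hadd _ hzS _ hmS
  have hzle : (w + w - u) + m ≤ w := by omega
  -- Arf: w + w - ((w+w-u)+m) = u - m ∈ S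
  have humS : u - m ∈ S := by
    have := hA w hw.1 w hw.1 _ hzS' hzle le_rfl
    have heq : w + w - ((w + w - u) + m) = u - m := by omega
    rwa [heq] at this
  have humod : (u - m) % m = (2 * r) % m := by
    have : u - m + m = u := by omega
    conv_rhs => rw [← hu.2, ← this]
    rw [Nat.add_mod_right]
  have : u ≤ u - m := Nat.sInf_le ⟨humS, humod⟩
  omega

theorem arf_aperyW_double (S : Set ℕ) (hS : IsNumericalSemigroup S)
    (hA : HasArfProperty S) (m : ℕ) (hm : m = multiplicityOf S) (hm2 : 2 < m) :
    ∀ k : ℕ, 0 < k → 2 * k < m →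
      aperyW S m (2 * k) ≤ aperyW S m k + k ∧
      aperyW S m (m - 2 * k) ≤ aperyW S m (m - k) + (m - k) := by
  intro k hk0 hk2
  constructor
  · have h := arf_key S hS hA m hm k hk0 (by omega)
    rwa [Nat.mod_eq_of_lt hk2] at h
  · have h := arf_key S hS hA m hm (m - k) (by omega) (by omega)
    have e : (2 * (m - k)) % m = m - 2 * k := by
      have h2 : 2 * (m - k) = m + (m - 2 * k) := by omega
      rw [h2, Nat.add_mod_left, Nat.mod_eq_of_lt (by omega)]
    rwa [e] at h
end

section
/- Let S be a numerical semigroup with the Arf property, multiplicity m > 2 and Kunz coordinates (x_1, …, x_{m−1}). Then for every integer k with 0 < k < m/2, one has x_{2k} ≤ x_k and x_{m−2k} ≤ x_{m−k} + 1. -/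
theorem arf_kunz_double (S : Set ℕ) (hS : IsNumericalSemigroup S)
    (hA : HasArfProperty S) (m : ℕ) (hm : m = multiplicityOf S) (hm2 : 2 < m)
    (x : ℕ → ℕ) (hx : ∀ i < m, aperyW S m i = x i * m + i) :
    ∀ k : ℕ, 0 < k → 2 * k < m →
      x (2 * k) ≤ x k ∧ x (m - 2 * k) ≤ x (m - k) + 1 := by
  obtain ⟨h0, hadd, hfin⟩ := hS
  obtain ⟨N, hN⟩ := hfin.bddAbove
  have hlarge : ∀ n, N < n → n ∈ S := by
    intro n hn
    by_contra h
    exact absurd (hN h) (not_le.mpr hn)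
  have hmpos : 0 < m := by omega
  have hmS : m ∈ S := by
    have hne : {n | n ∈ S ∧ 0 < n}.Nonempty := ⟨N + 1, hlarge _ (by omega), by omega⟩
    rw [hm]; exact (Nat.sInf_mem hne).1
  have hmul : ∀ j : ℕ, j * m ∈ S := by
    intro j
    induction j with
    | zero => simpa using h0
    | succ j ih =>
      have := hadd _ ih _ hmS
      simpa [Nat.succ_mul] using this
  have hw : ∀ i, i < m → (aperyW S m i ∈ S ∧ aperyW S m i % m = i) := by
    intro i hi
    have hne : {s | s ∈ S ∧ s % m = i}.Nonempty := by
      refine ⟨i + m * (N + 1), hlarge _ (by nlinarith), ?_⟩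
      simp [Nat.add_mul_mod_self_left, Nat.mod_eq_of_lt hi]
    exact Nat.sInf_mem hne
  have hwle : ∀ i s, s ∈ S → s % m = i → aperyW S m i ≤ s := by
    intro i s hs hsm; exact Nat.sInf_le ⟨hs, hsm⟩
  have key : ∀ i, 0 < i → i < m → aperyW S m ((2 * i) % m) ≤ x i * m + 2 * i := by
    intro i hi0 him
    obtain ⟨hwS, hwm⟩ := hw i him
    have hxi : aperyW S m i = x i * m + i := hx i him
    have hwpos : 0 < aperyW S m i := by
      have := Nat.mod_le (aperyW S m i) m
      omega
    have hx1 : 1 ≤ x i := by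
      have hge : multiplicityOf S ≤ aperyW S m i := Nat.sInf_le ⟨hwS, hwpos⟩
      rw [← hm] at hge
      nlinarith
    have hz : x i * m ∈ S := hmul _
    have hzle : x i * m ≤ aperyW S m i := by omega
    have harf := hA (aperyW S m i) hwS (aperyW S m i) hwS (x i * m) hz hzle le_rfl
    have heq : aperyW S m i + aperyW S m i - x i * m = x i * m + 2 * i := by omega
    rw [heq] at harf
    refine hwle _ _ harf ?_
    rw [Nat.add_comm, Nat.add_mul_mod_self_right]
  intro k hk hkm
  constructor
  · have h1 := key k hk (by omega)
    rw [Nat.mod_eq_of_lt (by omega : 2 * k < m), hx (2 * k) (by omega)] at h1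
    have h2 : x (2 * k) * m ≤ x k * m := by omega
    exact Nat.le_of_mul_le_mul_right h2 hmpos
  · have h1 := key (m - k) (by omega) (by omega)
    have e : 2 * (m - k) = m + (m - 2 * k) := by omega
    rw [e, Nat.add_mod_left, Nat.mod_eq_of_lt (by omega : m - 2 * k < m),
      hx (m - 2 * k) (by omega)] at h1
    have h2 : x (m - 2 * k) * m ≤ (x (m - k) + 1) * m := by
      have : (x (m - k) + 1) * m = x (m - k) * m + m := by ring
      omega
    exact Nat.le_of_mul_le_mul_right h2 hmpos
end
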